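/- arXiv:2310.17350 — 7 statements merged into one kernel-verified Lean document; each statement's English description precedes it below -/
import Mathlib

section
/- Let H be a real Hilbert space, let 0<α≤1, let t>0, and let φ:(0,t)→H be square-integrable. Then ∫₀ᵗ ‖(𝓘^α φ)(s)‖² ds ≤ ω_{α+1}(t) · ∫₀ᵗ ω_α(t−s) (∫₀ˢ ‖φ(q)‖² dq) ds. -/
open MeasureTheory intervalIntegral

/-- The Riemann–Liouville kernel `ω_α(t) = t^(α-1)/Γ(α)`. -/
noncomputable def rlKernel (α t : ℝ) : ℝ := t ^ (α - 1) / Real.Gamma α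

open Set
open scoped ENNReal NNReal

lemma rlKernel_nonneg {α : ℝ} (hα : 0 < α) {x : ℝ} (hx : 0 ≤ x) : 0 ≤ rlKernel α x :=
  div_nonneg (Real.rpow_nonneg hx _) (Real.Gamma_pos_of_pos hα).le

lemma rlKernel_measurable (α : ℝ) : Measurable (rlKernel α) :=
  (measurable_id.pow measurable_const).div_const _

lemma rlKernel_mono {α : ℝ} (hα : 0 < α) {x y : ℝ} (hx : 0 ≤ x) (hxy : x ≤ y) :
    rlKernel (α + 1) x ≤ rlKernel (α + 1) y := by
  unfold rlKernel
  have h : 0 < Real.Gamma (α + 1) := Real.Gamma_pos_of_pos (by linarith)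
  exact div_le_div₀ (Real.rpow_nonneg (hx.trans hxy) _)
    (Real.rpow_le_rpow hx hxy (by linarith)) h le_rfl

lemma rlKernel_intervalIntegrable_left {α : ℝ} (hα : 0 < α) (a b : ℝ) :
    IntervalIntegrable (fun u => rlKernel α (b - u)) volume a b := by
  have h : IntervalIntegrable (fun x : ℝ => x ^ (α - 1) / Real.Gamma α) volume (b - a) (b - b) :=
    (intervalIntegrable_rpow' (by linarith)).div_const _
  simpa [rlKernel] using h.comp_sub_left b

lemma rlKernel_intervalIntegrable_right {α : ℝ} (hα : 0 < α) (a b : ℝ) :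
    IntervalIntegrable (fun u => rlKernel α (u - a)) volume a b := by
  have h : IntervalIntegrable (fun x : ℝ => x ^ (α - 1) / Real.Gamma α) volume (a - a) (b - a) :=
    (intervalIntegrable_rpow' (by linarith)).div_const _
  simpa [rlKernel] using h.comp_sub_right a

lemma integral_rlKernel_left {α : ℝ} (hα : 0 < α) (a b : ℝ) :
    ∫ u in a..b, rlKernel α (b - u) = rlKernel (α + 1) (b - a) := by
  unfold rlKernel
  rw [integral_comp_sub_left (fun x => x ^ (α - 1) / Real.Gamma α) b, sub_self]
  rw [intervalIntegral.integral_div, integral_rpow (Or.inl (by linarith))]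
  rw [Real.Gamma_add_one hα.ne', Real.zero_rpow (by linarith : α - 1 + 1 ≠ 0)]
  have hg : Real.Gamma α ≠ 0 := (Real.Gamma_pos_of_pos hα).ne'
  field_simp
  rw [show α - 1 + 1 = α by ring, show α + 1 - 1 = α by ring, sub_zero,
    mul_div_cancel_left₀ _ hα.ne']

lemma integral_rlKernel_right {α : ℝ} (hα : 0 < α) (a b : ℝ) :
    ∫ u in a..b, rlKernel α (u - a) = rlKernel (α + 1) (b - a) := by
  unfold rlKernel
  rw [integral_comp_sub_right (fun x => x ^ (α - 1) / Real.Gamma α) a, sub_self]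
  rw [intervalIntegral.integral_div, integral_rpow (Or.inl (by linarith))]
  rw [Real.Gamma_add_one hα.ne', Real.zero_rpow (by linarith : α - 1 + 1 ≠ 0)]
  have hg : Real.Gamma α ≠ 0 := (Real.Gamma_pos_of_pos hα).ne'
  field_simp
  rw [show α - 1 + 1 = α by ring, show α + 1 - 1 = α by ring, sub_zero,
    mul_div_cancel_left₀ _ hα.ne']

lemma lint_ker_left {α : ℝ} (hα : 0 < α) {a b : ℝ} (hab : a ≤ b) :
    ∫⁻ u in Ioo a b, ENNReal.ofReal (rlKernel α (b - u)) =
      ENNReal.ofReal (rlKernel (α + 1) (b - a)) := by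
  rw [← integral_rlKernel_left hα a b, integral_of_le hab, integral_Ioc_eq_integral_Ioo,
    ← ofReal_integral_eq_lintegral_ofReal
      (((rlKernel_intervalIntegrable_left hα a b).1).mono_set Ioo_subset_Ioc_self)
      ((ae_restrict_iff' measurableSet_Ioo).2 (Filter.Eventually.of_forall fun u hu =>
        rlKernel_nonneg hα (by linarith [hu.2])))]

lemma lint_ker_right {α : ℝ} (hα : 0 < α) {a b : ℝ} (hab : a ≤ b) :
    ∫⁻ u in Ioo a b, ENNReal.ofReal (rlKernel α (u - a)) =
      ENNReal.ofReal (rlKernel (α + 1) (b - a)) := by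
  rw [← integral_rlKernel_right hα a b, integral_of_le hab, integral_Ioc_eq_integral_Ioo,
    ← ofReal_integral_eq_lintegral_ofReal
      (((rlKernel_intervalIntegrable_right hα a b).1).mono_set Ioo_subset_Ioc_self)
      ((ae_restrict_iff' measurableSet_Ioo).2 (Filter.Eventually.of_forall fun u hu =>
        rlKernel_nonneg hα (by linarith [hu.1])))]

lemma inter_Ioo_left {s t : ℝ} (hst : s ≤ t) : Iio s ∩ Ioo 0 t = Ioo 0 s := by
  ext q; constructor
  · rintro ⟨h1, h2, h3⟩; exact ⟨h2, h1⟩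
  · rintro ⟨h1, h2⟩; exact ⟨h2, h1, lt_of_lt_of_le h2 hst⟩

lemma inter_Ioo_right {q t : ℝ} (hq : 0 ≤ q) : Ioi q ∩ Ioo 0 t = Ioo q t := by
  ext s; constructor
  · rintro ⟨h1, h2, h3⟩; exact ⟨h1, h3⟩
  · rintro ⟨h1, h2⟩; exact ⟨h1, lt_of_le_of_lt hq h1, h2⟩

lemma lintegral_triangle {t : ℝ} (f : ℝ → ℝ → ℝ≥0∞)
    (hf : Measurable (Function.uncurry f)) :
    ∫⁻ s in Ioo 0 t, ∫⁻ q in Ioo 0 s, f s q ∂volume ∂volume =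
      ∫⁻ q in Ioo 0 t, ∫⁻ s in Ioo q t, f s q ∂volume ∂volume := by
  have hset : MeasurableSet {p : ℝ × ℝ | p.2 < p.1} :=
    measurableSet_lt measurable_snd measurable_fst
  set I : ℝ × ℝ → ℝ≥0∞ := ({p : ℝ × ℝ | p.2 < p.1}).indicator (Function.uncurry f) with hI
  have hg : AEMeasurable (Function.uncurry fun s q => I (s, q))
      ((volume.restrict (Ioo 0 t)).prod (volume.restrict (Ioo 0 t))) :=
    ((hf.indicator hset).comp measurable_id).aemeasurable
  have e1 : (fun s => ∫⁻ q in Ioo 0 t, I (s, q)) =ᵐ[volume.restrict (Ioo (0:ℝ) t)]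
      fun s => ∫⁻ q in Ioo 0 s, f s q := by
    refine (ae_restrict_iff' measurableSet_Ioo).2 (Filter.Eventually.of_forall fun s hs => ?_)
    have h : (fun q => I (s, q)) = (Iio s).indicator (f s) := by
      ext q; by_cases h : q < s <;>
        simp [hI, Set.indicator, h, Function.uncurry]
    show ∫⁻ q in Ioo 0 t, I (s, q) = _
    rw [show (fun q => I (s, q)) = (Iio s).indicator (f s) from h, lintegral_indicator measurableSet_Iio, Measure.restrict_restrict measurableSet_Iio,
      inter_Ioo_left hs.2.le]
  have e2 : (fun q => ∫⁻ s in Ioo 0 t, I (s, q)) =ᵐ[volume.restrict (Ioo (0:ℝ) t)]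
      fun q => ∫⁻ s in Ioo q t, f s q := by
    refine (ae_restrict_iff' measurableSet_Ioo).2 (Filter.Eventually.of_forall fun q hq => ?_)
    have h : (fun s => I (s, q)) = (Ioi q).indicator (fun s => f s q) := by
      ext s; by_cases h : q < s <;>
        simp [hI, Set.indicator, h, Function.uncurry]
    show ∫⁻ s in Ioo 0 t, I (s, q) = _
    rw [show (fun s => I (s, q)) = (Ioi q).indicator (fun s => f s q) from h, lintegral_indicator measurableSet_Ioi, Measure.restrict_restrict measurableSet_Ioi,
      inter_Ioo_right hq.1.le]
  calc ∫⁻ s in Ioo 0 t, ∫⁻ q in Ioo 0 s, f s q ∂volume ∂volume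
      = ∫⁻ s in Ioo 0 t, ∫⁻ q in Ioo 0 t, I (s, q) ∂volume ∂volume :=
        (lintegral_congr_ae e1).symm
    _ = ∫⁻ q in Ioo 0 t, ∫⁻ s in Ioo 0 t, I (s, q) ∂volume ∂volume :=
        lintegral_lintegral_swap hg
    _ = ∫⁻ q in Ioo 0 t, ∫⁻ s in Ioo q t, f s q ∂volume ∂volume :=
        lintegral_congr_ae e2

lemma param_stronglyMeasurable {E : Type*} [NormedAddCommGroup E] [NormedSpace ℝ E]
    (t : ℝ) (f : ℝ → ℝ → E) (hf : StronglyMeasurable (Function.uncurry f)) :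
    StronglyMeasurable (fun s => ∫ q in Ioo (0:ℝ) t,
      ({p : ℝ × ℝ | p.2 < p.1}).indicator (Function.uncurry f) (s, q)) := by
  have hset : MeasurableSet {p : ℝ × ℝ | p.2 < p.1} :=
    measurableSet_lt measurable_snd measurable_fst
  exact (hf.indicator hset).integral_prod_right'

lemma param_eq {E : Type*} [NormedAddCommGroup E] [NormedSpace ℝ E]
    {t s : ℝ} (hst : s ≤ t) (f : ℝ → ℝ → E) :
    (∫ q in Ioo (0:ℝ) t, ({p : ℝ × ℝ | p.2 < p.1}).indicator (Function.uncurry f) (s, q)) =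
      ∫ q in Ioo 0 s, f s q := by
  have h : (fun q => ({p : ℝ × ℝ | p.2 < p.1}).indicator (Function.uncurry f) (s, q)) =
      (Iio s).indicator (f s) := by
    ext q; by_cases h : q < s <;> simp [Set.indicator, h, Function.uncurry]
  rw [h, MeasureTheory.integral_indicator measurableSet_Iio, Measure.restrict_restrict measurableSet_Iio,
    inter_Ioo_left hst]

/-- The Riemann–Liouville fractional integral `(𝓘^α φ)(t) = ∫₀ᵗ ω_α(t-s) φ(s) ds`. -/
noncomputable def fracInt {H : Type*} [NormedAddCommGroup H] [NormedSpace ℝ H]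
    (α : ℝ) (φ : ℝ → H) (t : ℝ) : H :=
  ∫ s in (0:ℝ)..t, rlKernel α (t - s) • φ s

lemma fracInt_eq_setIntegral {H : Type*} [NormedAddCommGroup H] [NormedSpace ℝ H]
    {α s : ℝ} (hs : 0 ≤ s) (ψ : ℝ → H) :
    fracInt α ψ s = ∫ q in Ioo 0 s, rlKernel α (s - q) • ψ q := by
  rw [fracInt, integral_of_le hs, integral_Ioc_eq_integral_Ioo]

lemma fracInt_aesm {H : Type*} [NormedAddCommGroup H] [NormedSpace ℝ H]
    {α t : ℝ} {ψ : ℝ → H} (hψ : StronglyMeasurable ψ) :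
    AEStronglyMeasurable (fracInt α ψ) (volume.restrict (Ioo 0 t)) := by
  set f : ℝ → ℝ → H := fun s q => rlKernel α (s - q) • ψ q with hf
  have hfm : StronglyMeasurable (Function.uncurry f) := by
    apply StronglyMeasurable.smul
    · exact ((rlKernel_measurable α).comp (measurable_fst.sub measurable_snd)).stronglyMeasurable
    · exact hψ.comp_measurable measurable_snd
  refine ((param_stronglyMeasurable t f hfm).aestronglyMeasurable).congr ?_
  refine (ae_restrict_iff' measurableSet_Ioo).2 (Filter.Eventually.of_forall fun s hs => ?_)
  exact (param_eq hs.2.le f).trans (fracInt_eq_setIntegral hs.1.le ψ).symm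

lemma pointwise_bound {H : Type*} [NormedAddCommGroup H] [NormedSpace ℝ H]
    {α t : ℝ} (hα : 0 < α) {ψ : ℝ → H} (hψ : StronglyMeasurable ψ)
    {s : ℝ} (hs0 : 0 < s) (hst : s ≤ t) :
    ENNReal.ofReal (‖fracInt α ψ s‖ ^ 2) ≤ ENNReal.ofReal (rlKernel (α + 1) t) *
      ∫⁻ q in Ioo 0 s, ENNReal.ofReal (rlKernel α (s - q)) * ENNReal.ofReal (‖ψ q‖ ^ 2) := by
  set Kq : ℝ → ℝ≥0∞ := fun q => ENNReal.ofReal (rlKernel α (s - q)) with hKq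
  set nψ : ℝ → ℝ≥0∞ := fun q => ENNReal.ofReal ‖ψ q‖ with hnψ
  set A : ℝ≥0∞ := ENNReal.ofReal (rlKernel (α + 1) s) with hA
  set B : ℝ≥0∞ := ∫⁻ q in Ioo 0 s, Kq q * ENNReal.ofReal (‖ψ q‖ ^ 2) with hB
  have hKm : Measurable Kq :=
    ENNReal.measurable_ofReal.comp ((rlKernel_measurable α).comp (measurable_const.sub measurable_id))
  have hnm : Measurable nψ := ENNReal.measurable_ofReal.comp hψ.norm.measurable
  -- step 1: norm of integral ≤ lintegral
  have h1 : (‖fracInt α ψ s‖₊ : ℝ≥0∞) ≤ ∫⁻ q in Ioo 0 s, Kq q * nψ q := by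
    rw [fracInt_eq_setIntegral hs0.le]
    refine le_trans (enorm_integral_le_lintegral_enorm _) (le_of_eq ?_)
    refine lintegral_congr_ae ((ae_restrict_iff' measurableSet_Ioo).2
      (Filter.Eventually.of_forall fun q hq => ?_))
    show ‖rlKernel α (s - q) • ψ q‖ₑ = Kq q * nψ q
    rw [enorm_smul,
      Real.enorm_eq_ofReal (rlKernel_nonneg hα (by linarith [hq.2])),
      ← ofReal_norm]
  -- step 2 : Cauchy-Schwarz
  have hconj : Real.HolderConjugate 2 2 := Real.HolderConjugate.two_two
  have hCS := ENNReal.lintegral_mul_le_Lp_mul_Lq (volume.restrict (Ioo 0 s)) hconj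
    ((hKm.pow measurable_const).aemeasurable :
      AEMeasurable (fun q => Kq q ^ ((1:ℝ)/2)) (volume.restrict (Ioo 0 s)))
    (((hKm.pow measurable_const).mul hnm).aemeasurable :
      AEMeasurable (fun q => Kq q ^ ((1:ℝ)/2) * nψ q) (volume.restrict (Ioo 0 s)))
  have hfg : (fun q => (Kq q ^ ((1:ℝ)/2)) * (Kq q ^ ((1:ℝ)/2) * nψ q)) =
      fun q => Kq q * nψ q := by
    funext q
    rw [← mul_assoc, ← ENNReal.rpow_add_of_nonneg ((1:ℝ)/2) ((1:ℝ)/2) (by norm_num) (by norm_num)]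
    norm_num
  have hf2 : (fun q => (Kq q ^ ((1:ℝ)/2)) ^ (2:ℝ)) = Kq := by
    funext q
    rw [← ENNReal.rpow_mul]
    norm_num
  have hg2 : (fun q => (Kq q ^ ((1:ℝ)/2) * nψ q) ^ (2:ℝ)) =
      fun q => Kq q * ENNReal.ofReal (‖ψ q‖ ^ 2) := by
    have hn2 : ∀ q, nψ q ^ (2:ℝ) = ENNReal.ofReal (‖ψ q‖ ^ 2) := fun q => by
      show (ENNReal.ofReal ‖ψ q‖) ^ (2:ℝ) = _
      rw [ENNReal.ofReal_rpow_of_nonneg (norm_nonneg _) (by norm_num : (0:ℝ) ≤ 2)]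
      norm_num [Real.rpow_natCast]
    have hK1 : ∀ q, (Kq q ^ ((1:ℝ)/2)) ^ (2:ℝ) = Kq q := fun q => by
      rw [← ENNReal.rpow_mul]; norm_num
    funext q
    rw [ENNReal.mul_rpow_of_nonneg _ _ (by norm_num : (0:ℝ) ≤ 2), hK1 q, hn2 q]
  have hAeq : ∫⁻ q in Ioo 0 s, Kq q = A := by
    have := lint_ker_left hα (le_of_lt hs0) (α := α) (a := 0) (b := s)
    simpa using this
  have h2 : ∫⁻ q in Ioo 0 s, Kq q * nψ q ≤ A ^ ((1:ℝ)/2) * B ^ ((1:ℝ)/2) := by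
    calc ∫⁻ q in Ioo 0 s, Kq q * nψ q
        = ∫⁻ q in Ioo 0 s, ((fun q => Kq q ^ ((1:ℝ)/2)) * fun q => Kq q ^ ((1:ℝ)/2) * nψ q) q := by
          refine lintegral_congr fun q => ?_
          exact (congrFun hfg q).symm
      _ ≤ (∫⁻ q in Ioo 0 s, (Kq q ^ ((1:ℝ)/2)) ^ (2:ℝ)) ^ ((1:ℝ)/2) *
            (∫⁻ q in Ioo 0 s, (Kq q ^ ((1:ℝ)/2) * nψ q) ^ (2:ℝ)) ^ ((1:ℝ)/2) := hCS
      _ = A ^ ((1:ℝ)/2) * B ^ ((1:ℝ)/2) := by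
          rw [lintegral_congr fun q => congrFun hf2 q, lintegral_congr fun q => congrFun hg2 q,
            hAeq]
  -- assemble
  have he : ENNReal.ofReal (‖fracInt α ψ s‖ ^ 2) = (‖fracInt α ψ s‖₊ : ℝ≥0∞) *
      (‖fracInt α ψ s‖₊ : ℝ≥0∞) := by
    rw [sq, ENNReal.ofReal_mul (norm_nonneg _), ofReal_norm, enorm_eq_nnnorm]
  have hAB : (A ^ ((1:ℝ)/2) * B ^ ((1:ℝ)/2)) * (A ^ ((1:ℝ)/2) * B ^ ((1:ℝ)/2)) = A * B := by
    rw [mul_mul_mul_comm, ← ENNReal.rpow_add_of_nonneg ((1:ℝ)/2) ((1:ℝ)/2) (by norm_num) (by norm_num),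
      ← ENNReal.rpow_add_of_nonneg ((1:ℝ)/2) ((1:ℝ)/2) (by norm_num) (by norm_num)]
    norm_num
  calc ENNReal.ofReal (‖fracInt α ψ s‖ ^ 2)
      = (‖fracInt α ψ s‖₊ : ℝ≥0∞) * (‖fracInt α ψ s‖₊ : ℝ≥0∞) := he
    _ ≤ (A ^ ((1:ℝ)/2) * B ^ ((1:ℝ)/2)) * (A ^ ((1:ℝ)/2) * B ^ ((1:ℝ)/2)) :=
        mul_le_mul' (h1.trans h2) (h1.trans h2)
    _ = A * B := hAB
    _ ≤ ENNReal.ofReal (rlKernel (α + 1) t) * B :=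
        mul_le_mul_left (ENNReal.ofReal_le_ofReal (rlKernel_mono hα hs0.le hst)) B

theorem stmt0 {H : Type*} [NormedAddCommGroup H] [InnerProductSpace ℝ H] [CompleteSpace H]
    (α t : ℝ) (hα : 0 < α) (hα1 : α ≤ 1) (ht : 0 < t) (φ : ℝ → H)
    (hφ : MemLp φ 2 (volume.restrict (Set.Ioo 0 t))) :
    ∫ s in (0:ℝ)..t, ‖fracInt α φ s‖ ^ 2 ≤
      rlKernel (α + 1) t *
        ∫ s in (0:ℝ)..t, rlKernel α (t - s) * ∫ q in (0:ℝ)..s, ‖φ q‖ ^ 2 := by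
  classical
  set ψ : ℝ → H := hφ.1.mk φ with hψdef
  have hψm : StronglyMeasurable ψ := hφ.1.stronglyMeasurable_mk
  have haeφ : φ =ᵐ[volume.restrict (Ioo 0 t)] ψ := hφ.1.ae_eq_mk
  have hψ2 : MemLp ψ 2 (volume.restrict (Ioo 0 t)) := hφ.ae_eq haeφ
  have hα1' : (0:ℝ) < α + 1 := by linarith
  -- integrability of ‖ψ‖² on (0,t)
  have hg1 : Integrable (fun q => ‖ψ q‖ ^ 2) (volume.restrict (Ioo 0 t)) := by
    have h := hψ2.integrable_norm_rpow (by norm_num) (by norm_num)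
    have h2 : (fun x => ‖ψ x‖ ^ ((2:ℝ≥0∞).toReal)) = fun q => ‖ψ q‖ ^ 2 := by
      funext q
      rw [ENNReal.toReal_ofNat]
      rw [show (2:ℝ) = ((2:ℕ):ℝ) by norm_num, Real.rpow_natCast]
    rwa [h2] at h
  set N : ℝ → ℝ≥0∞ := fun q => ENNReal.ofReal (‖ψ q‖ ^ 2) with hN
  have hNm : Measurable N :=
    ENNReal.measurable_ofReal.comp (hψm.norm.measurable.pow_const 2)
  set Q : ℝ≥0∞ := ∫⁻ q in Ioo 0 t, ENNReal.ofReal (rlKernel (α + 1) (t - q)) * N q with hQ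
  -- finiteness of Q
  have hNfin : ∫⁻ q in Ioo 0 t, N q < ∞ := by
    have h : ∫⁻ q in Ioo 0 t, ‖(‖ψ q‖ ^ 2)‖ₑ < ∞ := hg1.hasFiniteIntegral
    refine lt_of_eq_of_lt (lintegral_congr fun q => ?_) h
    rw [Real.enorm_eq_ofReal (sq_nonneg _)]
  have hQfin : Q ≠ ∞ := by
    have hle : Q ≤ ENNReal.ofReal (rlKernel (α + 1) t) * ∫⁻ q in Ioo 0 t, N q := by
      rw [hQ, ← lintegral_const_mul' _ _ ENNReal.ofReal_ne_top]
      refine lintegral_mono_ae ((ae_restrict_iff' measurableSet_Ioo).2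
        (Filter.Eventually.of_forall fun q hq => ?_))
      exact mul_le_mul_left (ENNReal.ofReal_le_ofReal
        (rlKernel_mono hα (by linarith [hq.2]) (by linarith [hq.1]))) _
    exact (hle.trans_lt (ENNReal.mul_lt_top ENNReal.ofReal_lt_top hNfin)).ne
  -- replace φ by ψ on both sides
  have hLcongr : ∫ s in (0:ℝ)..t, ‖fracInt α φ s‖ ^ 2 = ∫ s in (0:ℝ)..t, ‖fracInt α ψ s‖ ^ 2 := by
    rw [integral_of_le ht.le, integral_of_le ht.le, integral_Ioc_eq_integral_Ioo,
      integral_Ioc_eq_integral_Ioo]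
    refine integral_congr_ae ((ae_restrict_iff' measurableSet_Ioo).2
      (Filter.Eventually.of_forall fun s hs => ?_))
    have hsub : φ =ᵐ[volume.restrict (Ioo 0 s)] ψ :=
      ae_restrict_of_ae_restrict_of_subset (Ioo_subset_Ioo_right hs.2.le) haeφ
    have heq : fracInt α φ s = fracInt α ψ s := by
      rw [fracInt_eq_setIntegral hs.1.le, fracInt_eq_setIntegral hs.1.le]
      exact integral_congr_ae (hsub.mono fun q hq => by
        show rlKernel α (s - q) • φ q = rlKernel α (s - q) • ψ q
        rw [hq])
    show ‖fracInt α φ s‖ ^ 2 = ‖fracInt α ψ s‖ ^ 2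
    rw [heq]
  have hRcongr : ∫ s in (0:ℝ)..t, rlKernel α (t - s) * ∫ q in (0:ℝ)..s, ‖φ q‖ ^ 2 =
      ∫ s in (0:ℝ)..t, rlKernel α (t - s) * ∫ q in (0:ℝ)..s, ‖ψ q‖ ^ 2 := by
    rw [integral_of_le ht.le, integral_of_le ht.le, integral_Ioc_eq_integral_Ioo,
      integral_Ioc_eq_integral_Ioo]
    refine integral_congr_ae ((ae_restrict_iff' measurableSet_Ioo).2
      (Filter.Eventually.of_forall fun s hs => ?_))
    have hsub : φ =ᵐ[volume.restrict (Ioo 0 s)] ψ :=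
      ae_restrict_of_ae_restrict_of_subset (Ioo_subset_Ioo_right hs.2.le) haeφ
    have heq : ∫ q in (0:ℝ)..s, ‖φ q‖ ^ 2 = ∫ q in (0:ℝ)..s, ‖ψ q‖ ^ 2 := by
      rw [integral_of_le hs.1.le, integral_of_le hs.1.le, integral_Ioc_eq_integral_Ioo,
        integral_Ioc_eq_integral_Ioo]
      exact integral_congr_ae (hsub.mono fun q hq => by
        show ‖φ q‖ ^ 2 = ‖ψ q‖ ^ 2
        rw [hq])
    show rlKernel α (t - s) * ∫ q in (0:ℝ)..s, ‖φ q‖ ^ 2 = _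
    rw [heq]
  rw [hLcongr, hRcongr]
  -- the LHS as a lintegral
  set L : ℝ≥0∞ := ∫⁻ s in Ioo 0 t, ENNReal.ofReal (‖fracInt α ψ s‖ ^ 2) with hLdef
  have hLHS : ∫ s in (0:ℝ)..t, ‖fracInt α ψ s‖ ^ 2 = L.toReal := by
    rw [integral_of_le ht.le, integral_Ioc_eq_integral_Ioo, hLdef,
      integral_eq_lintegral_of_nonneg_ae (Filter.Eventually.of_forall fun s => sq_nonneg _)
        (((fracInt_aesm hψm).norm.aemeasurable.pow_const 2).aestronglyMeasurable)]
  -- bound on L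
  have hLbound : L ≤ ENNReal.ofReal (rlKernel (α + 1) t) * Q := by
    have h2 : (∫⁻ s in Ioo 0 t, ∫⁻ q in Ioo 0 s,
        ENNReal.ofReal (rlKernel α (s - q)) * N q ∂volume ∂volume) = Q := by
      have hmeas : Measurable (Function.uncurry
          fun s q => ENNReal.ofReal (rlKernel α (s - q)) * N q) :=
        ((ENNReal.measurable_ofReal.comp
          ((rlKernel_measurable α).comp (measurable_fst.sub measurable_snd))).mul
          (hNm.comp measurable_snd))
      rw [lintegral_triangle _ hmeas, hQ]
      refine lintegral_congr_ae ((ae_restrict_iff' measurableSet_Ioo).2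
        (Filter.Eventually.of_forall fun q hq => ?_))
      show (∫⁻ s in Ioo q t, ENNReal.ofReal (rlKernel α (s - q)) * N q) =
        ENNReal.ofReal (rlKernel (α + 1) (t - q)) * N q
      rw [lintegral_mul_const' _ _ ENNReal.ofReal_ne_top, lint_ker_right hα hq.2.le]
    rw [← h2, hLdef, ← lintegral_const_mul' _ _ ENNReal.ofReal_ne_top]
    refine lintegral_mono_ae ((ae_restrict_iff' measurableSet_Ioo).2
      (Filter.Eventually.of_forall fun s hs => ?_))
    exact pointwise_bound hα hψm hs.1 hs.2.le
  -- the RHS equals Q.toReal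
  have hRHS : ∫ s in (0:ℝ)..t, rlKernel α (t - s) * ∫ q in (0:ℝ)..s, ‖ψ q‖ ^ 2 = Q.toReal := by
    have hf2m : StronglyMeasurable
        (Function.uncurry fun (_ : ℝ) q => ‖ψ q‖ ^ 2 : ℝ × ℝ → ℝ) :=
      ((hψm.norm.measurable.pow_const 2).comp measurable_snd).stronglyMeasurable
    have hGaesm : AEStronglyMeasurable (fun s => ∫ q in Ioo (0:ℝ) s, ‖ψ q‖ ^ 2)
        (volume.restrict (Ioo 0 t)) := by
      refine ((param_stronglyMeasurable t _ hf2m).aestronglyMeasurable).congr ?_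
      refine (ae_restrict_iff' measurableSet_Ioo).2
        (Filter.Eventually.of_forall fun s hs => ?_)
      exact param_eq hs.2.le _
    have haesm : AEStronglyMeasurable
        (fun s => rlKernel α (t - s) * ∫ q in Ioo (0:ℝ) s, ‖ψ q‖ ^ 2)
        (volume.restrict (Ioo 0 t)) :=
      ((((rlKernel_measurable α).comp (measurable_const.sub measurable_id)).aemeasurable).mul
        hGaesm.aemeasurable).aestronglyMeasurable
    have hnn : 0 ≤ᵐ[volume.restrict (Ioo 0 t)]
        fun s => rlKernel α (t - s) * ∫ q in Ioo (0:ℝ) s, ‖ψ q‖ ^ 2 := by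
      refine (ae_restrict_iff' measurableSet_Ioo).2
        (Filter.Eventually.of_forall fun s hs => ?_)
      refine mul_nonneg (rlKernel_nonneg hα (by linarith [hs.2])) ?_
      exact setIntegral_nonneg measurableSet_Ioo fun q _ => sq_nonneg _
    have hstep : ∫ s in (0:ℝ)..t, rlKernel α (t - s) * ∫ q in (0:ℝ)..s, ‖ψ q‖ ^ 2 =
        ∫ s in Ioo (0:ℝ) t, rlKernel α (t - s) * ∫ q in Ioo (0:ℝ) s, ‖ψ q‖ ^ 2 := by
      rw [integral_of_le ht.le, integral_Ioc_eq_integral_Ioo]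
      refine integral_congr_ae ((ae_restrict_iff' measurableSet_Ioo).2
        (Filter.Eventually.of_forall fun s hs => ?_))
      show rlKernel α (t - s) * ∫ q in (0:ℝ)..s, ‖ψ q‖ ^ 2 = _
      rw [integral_of_le hs.1.le, integral_Ioc_eq_integral_Ioo]
    rw [hstep, integral_eq_lintegral_of_nonneg_ae hnn haesm]
    congr 1
    have hmeas3 : Measurable (Function.uncurry
        fun s q => ENNReal.ofReal (rlKernel α (t - s)) * N q) :=
      ((ENNReal.measurable_ofReal.comp
        ((rlKernel_measurable α).comp (measurable_const.sub measurable_fst))).mul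
        (hNm.comp measurable_snd))
    calc ∫⁻ s in Ioo 0 t, ENNReal.ofReal (rlKernel α (t - s) * ∫ q in Ioo (0:ℝ) s, ‖ψ q‖ ^ 2)
        = ∫⁻ s in Ioo 0 t, ∫⁻ q in Ioo 0 s,
            ENNReal.ofReal (rlKernel α (t - s)) * N q ∂volume ∂volume := by
          refine lintegral_congr_ae ((ae_restrict_iff' measurableSet_Ioo).2
            (Filter.Eventually.of_forall fun s hs => ?_))
          show ENNReal.ofReal (rlKernel α (t - s) * ∫ q in Ioo (0:ℝ) s, ‖ψ q‖ ^ 2) =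
            ∫⁻ q in Ioo 0 s, ENNReal.ofReal (rlKernel α (t - s)) * N q
          rw [ENNReal.ofReal_mul (rlKernel_nonneg hα (by linarith [hs.2])),
            lintegral_const_mul' _ _ ENNReal.ofReal_ne_top,
            ofReal_integral_eq_lintegral_ofReal
              (hg1.mono_measure (Measure.restrict_mono (Ioo_subset_Ioo_right hs.2.le) le_rfl))
              (Filter.Eventually.of_forall fun q => sq_nonneg _)]
      _ = ∫⁻ q in Ioo 0 t, ∫⁻ s in Ioo q t,
            ENNReal.ofReal (rlKernel α (t - s)) * N q ∂volume ∂volume :=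
          lintegral_triangle _ hmeas3
      _ = Q := by
          rw [hQ]
          refine lintegral_congr_ae ((ae_restrict_iff' measurableSet_Ioo).2
            (Filter.Eventually.of_forall fun q hq => ?_))
          show (∫⁻ s in Ioo q t, ENNReal.ofReal (rlKernel α (t - s)) * N q) =
            ENNReal.ofReal (rlKernel (α + 1) (t - q)) * N q
          rw [lintegral_mul_const' _ _ ENNReal.ofReal_ne_top, lint_ker_left hα hq.2.le]
  rw [hLHS, hRHS]
  have hmono := ENNReal.toReal_mono
    (ENNReal.mul_ne_top ENNReal.ofReal_ne_top hQfin) hLbound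
  rwa [ENNReal.toReal_mul, ENNReal.toReal_ofReal (rlKernel_nonneg hα1' ht.le)] at hmono
end

section
/- Generalized Leibniz identity: let H be a real Hilbert space, 0<α<1, and φ∈C¹([0,T];H). Then for every t∈(0,T], ∂_t^α(sφ(s))(t) = t ∂_t^α φ(t) + α (𝓘^{1−α} φ)(t) + t ω_{1−α}(t) φ(0); explicitly, ∫₀ᵗ ω_{1−α}(t−s)·(φ(s)+sφ'(s)) ds = t ∫₀ᵗ ω_{1−α}(t−s) φ'(s) ds + α ∫₀ᵗ ω_{1−α}(t−s) φ(s) ds + t ω_{1−α}(t) φ(0). -/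
open MeasureTheory intervalIntegral

lemma aux_smul_cont {H : Type*} [NormedAddCommGroup H] [NormedSpace ℝ H]
    {f : ℝ → ℝ} {g : ℝ → H} {a b : ℝ} (hab : a ≤ b)
    (hf : IntervalIntegrable f volume a b) (hg : ContinuousOn g (Set.Icc a b)) :
    IntervalIntegrable (fun x => f x • g x) volume a b := by
  rw [intervalIntegrable_iff_integrableOn_Ioc_of_le hab] at hf ⊢
  obtain ⟨M, hM⟩ := isCompact_Icc.exists_bound_of_continuousOn hg
  refine Integrable.smul_of_top_left hf ?_
  refine memLp_top_of_bound
    ((hg.mono Set.Ioc_subset_Icc_self).aestronglyMeasurable measurableSet_Ioc) M ?_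
  filter_upwards [ae_restrict_mem measurableSet_Ioc] with x hx
  exact hM x (Set.Ioc_subset_Icc_self hx)

/-- Generalized Leibniz identity for the Caputo derivative `∂_t^α φ = 𝓘^{1-α}(φ')`. -/
theorem stmt4 {H : Type*} [NormedAddCommGroup H] [InnerProductSpace ℝ H] [CompleteSpace H]
    (α T : ℝ) (hα0 : 0 < α) (hα1 : α < 1) (hT : 0 < T)
    (φ φ' : ℝ → H) (hderiv : ∀ s ∈ Set.Icc (0:ℝ) T, HasDerivAt φ (φ' s) s)
    (hcont : ContinuousOn φ' (Set.Icc (0:ℝ) T)) :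
    ∀ t ∈ Set.Ioc (0:ℝ) T,
      (∫ s in (0:ℝ)..t, rlKernel (1 - α) (t - s) • (φ s + s • φ' s)) =
        t • (∫ s in (0:ℝ)..t, rlKernel (1 - α) (t - s) • φ' s)
          + α • (∫ s in (0:ℝ)..t, rlKernel (1 - α) (t - s) • φ s)
          + (t * rlKernel (1 - α) t) • φ 0 := by
  intro t ht
  obtain ⟨ht0, htT⟩ := ht
  have h1α : (0:ℝ) < 1 - α := by linarith
  have hIcc : Set.Icc (0:ℝ) t ⊆ Set.Icc (0:ℝ) T := Set.Icc_subset_Icc le_rfl htT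
  have hφc : ContinuousOn φ (Set.Icc 0 t) := fun s hs =>
    ((hderiv s (hIcc hs)).continuousAt).continuousWithinAt
  have hφ'c : ContinuousOn φ' (Set.Icc 0 t) := hcont.mono hIcc
  set Γ := Real.Gamma (1 - α) with hΓdef
  have hΓpos : 0 < Γ := Real.Gamma_pos_of_pos h1α
  have hrl : ∀ u : ℝ, rlKernel (1 - α) u = Γ⁻¹ * u ^ (-α) := by
    intro u
    rw [rlKernel, show (1 - α - 1) = -α by ring, div_eq_inv_mul, hΓdef]
  -- kernel integrability
  have hK : IntervalIntegrable (fun s => (t - s) ^ (-α)) volume 0 t := by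
    have h1 : IntervalIntegrable (fun x : ℝ => x ^ (-α)) volume 0 t :=
      intervalIntegral.intervalIntegrable_rpow' (by linarith)
    have h2 := h1.comp_sub_left t
    simpa using h2.symm
  set A := ∫ s in (0:ℝ)..t, (t - s) ^ (-α) • φ s with hAdef
  set B := ∫ s in (0:ℝ)..t, (t - s) ^ (-α) • φ' s with hBdef
  have hA : IntervalIntegrable (fun s => (t - s) ^ (-α) • φ s) volume 0 t :=
    aux_smul_cont ht0.le hK hφc
  have hB : IntervalIntegrable (fun s => (t - s) ^ (-α) • φ' s) volume 0 t :=
    aux_smul_cont ht0.le hK hφ'c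
  have hcont1 : Continuous (fun s : ℝ => (t - s) ^ (1 - α)) := by
    have h : Continuous (fun x : ℝ => x ^ (1 - α)) :=
      continuous_iff_continuousAt.2 fun x =>
        Real.continuousAt_rpow_const x _ (Or.inr h1α.le)
    exact h.comp (continuous_const.sub continuous_id)
  have hC : IntervalIntegrable (fun s => (t - s) ^ (1 - α) • φ' s) volume 0 t :=
    aux_smul_cont ht0.le (hcont1.intervalIntegrable 0 t) hφ'c
  set C := ∫ s in (0:ℝ)..t, (t - s) ^ (1 - α) • φ' s with hCdef
  have hA' : IntervalIntegrable (fun s => (-(1 - α)) • ((t - s) ^ (-α) • φ s)) volume 0 t :=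
    hA.smul (-(1 - α))
  -- FTC / integration by parts
  have hFTC : (∫ s in (0:ℝ)..t,
        ((t - s) ^ (1 - α) • φ' s + (-(1 - α)) • ((t - s) ^ (-α) • φ s)))
      = ((t - t) ^ (1 - α)) • φ t - ((t - 0) ^ (1 - α)) • φ 0 := by
    refine intervalIntegral.integral_eq_sub_of_hasDeriv_right_of_le ht0.le
      ((hcont1.continuousOn).smul hφc) (fun s hs => ?_) (hC.add hA')
    have hts : t - s ≠ 0 := sub_ne_zero.2 (ne_of_gt hs.2)
    have hg : HasDerivAt (fun s : ℝ => (t - s) ^ (1 - α))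
        (-((1 - α) * (t - s) ^ (-α))) s := by
      have h1 : HasDerivAt (fun y : ℝ => y ^ (1 - α))
          ((1 - α) * (t - s) ^ ((1 - α) - 1)) (t - s) :=
        Real.hasDerivAt_rpow_const (Or.inl hts)
      have h2 : HasDerivAt (fun s : ℝ => t - s) (-1) s :=
        (hasDerivAt_id s).const_sub t
      have h3 := h1.comp s h2
      simpa [show (1 - α - 1) = -α by ring, mul_neg, Function.comp_def] using h3
    have hφd : HasDerivAt φ (φ' s) s := hderiv s (hIcc ⟨hs.1.le, hs.2.le⟩)
    refine ((hg.smul hφd).congr_deriv ?_).hasDerivWithinAt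
    match_scalars <;> ring
  have key : C = (1 - α) • A - (t ^ (1 - α)) • φ 0 := by
    rw [intervalIntegral.integral_add hC hA', intervalIntegral.integral_smul,
      sub_self, sub_zero, Real.zero_rpow (ne_of_gt h1α), zero_smul, ← hAdef, ← hCdef] at hFTC
    linear_combination (norm := module) hFTC
  -- express the three statement integrals
  have e1 : (∫ s in (0:ℝ)..t, rlKernel (1 - α) (t - s) • φ s) = Γ⁻¹ • A := by
    rw [hAdef, ← intervalIntegral.integral_smul]
    apply intervalIntegral.integral_congr
    intro s _
    show rlKernel (1 - α) (t - s) • φ s = Γ⁻¹ • ((t - s) ^ (-α) • φ s)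
    rw [hrl, mul_smul]
  have e2 : (∫ s in (0:ℝ)..t, rlKernel (1 - α) (t - s) • φ' s) = Γ⁻¹ • B := by
    rw [hBdef, ← intervalIntegral.integral_smul]
    apply intervalIntegral.integral_congr
    intro s _
    show rlKernel (1 - α) (t - s) • φ' s = Γ⁻¹ • ((t - s) ^ (-α) • φ' s)
    rw [hrl, mul_smul]
  have hsplit : ∀ s ∈ Set.uIcc (0:ℝ) t,
      rlKernel (1 - α) (t - s) • (φ s + s • φ' s)
        = Γ⁻¹ • ((t - s) ^ (-α) • φ s) + (t * Γ⁻¹) • ((t - s) ^ (-α) • φ' s)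
          - Γ⁻¹ • ((t - s) ^ (1 - α) • φ' s) := by
    intro s hs
    rw [Set.uIcc_of_le ht0.le] at hs
    have hts : (0:ℝ) ≤ t - s := by linarith [hs.2]
    have hpow : (t - s) ^ (1 - α) = (t - s) * (t - s) ^ (-α) := by
      rw [show (1 - α) = 1 + -α by ring,
        Real.rpow_add' hts (by rw [show (1:ℝ) + -α = 1 - α by ring]; exact ne_of_gt h1α),
        Real.rpow_one]
    rw [hrl, hpow]
    simp only [smul_add, smul_smul]
    match_scalars <;> ring
  have hA1 : IntervalIntegrable (fun s => Γ⁻¹ • ((t - s) ^ (-α) • φ s)) volume 0 t :=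
    hA.smul Γ⁻¹
  have hB1 : IntervalIntegrable (fun s => (t * Γ⁻¹) • ((t - s) ^ (-α) • φ' s)) volume 0 t :=
    hB.smul (t * Γ⁻¹)
  have hC1 : IntervalIntegrable (fun s => Γ⁻¹ • ((t - s) ^ (1 - α) • φ' s)) volume 0 t :=
    hC.smul Γ⁻¹
  have e3 : (∫ s in (0:ℝ)..t, rlKernel (1 - α) (t - s) • (φ s + s • φ' s))
      = Γ⁻¹ • A + (t * Γ⁻¹) • B - Γ⁻¹ • C := by
    rw [intervalIntegral.integral_congr hsplit]
    rw [intervalIntegral.integral_sub (hA1.add hB1) hC1,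
      intervalIntegral.integral_add hA1 hB1,
      intervalIntegral.integral_smul, intervalIntegral.integral_smul,
      intervalIntegral.integral_smul, ← hAdef, ← hBdef, ← hCdef]
  rw [e1, e2, e3, key, hrl]
  have hpt : t ^ (1 - α) = t * t ^ (-α) := by
    rw [show (1 - α) = 1 + -α by ring,
      Real.rpow_add' ht0.le (by rw [show (1:ℝ) + -α = 1 - α by ring]; exact ne_of_gt h1α),
      Real.rpow_one]
  rw [hpt]
  match_scalars <;> field_simp <;> ring
end

section
/- Alikhanov's inequality: let H be a real Hilbert space, 0<α<1, and v∈C¹([0,T];H). Then for every t∈(0,T], ∂_t^α(‖v‖²)(t) ≤ 2⟨(∂_t^α v)(t), v(t)⟩; explicitly, ∫₀ᵗ ω_{1−α}(t−s) · (d/ds ‖v(s)‖²) ds ≤ 2⟨∫₀ᵗ ω_{1−α}(t−s) v'(s) ds, v(t)⟩. -/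
open MeasureTheory intervalIntegral RealInnerProductSpace

lemma rlK_int (α t : ℝ) (hα1 : α < 1) :
    IntervalIntegrable (fun s => rlKernel (1-α) (t-s)) volume 0 t := by
  have h : IntervalIntegrable (fun x : ℝ => x ^ (-α)) volume t 0 :=
    intervalIntegral.intervalIntegrable_rpow' (by linarith)
  have h2 := (h.comp_sub_left t).div_const (Real.Gamma (1-α))
  simp only [sub_self, sub_zero] at h2
  convert h2 using 2 with s
  rw [rlKernel]
  norm_num

lemma rlK_nonneg (α t s : ℝ) (hα1 : α < 1) (hst : s ≤ t) :
    0 ≤ rlKernel (1-α) (t-s) := by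
  rw [rlKernel]
  apply div_nonneg (Real.rpow_nonneg (by linarith) _)
  exact (Real.Gamma_pos_of_pos (by linarith)).le

lemma rlK_contOn (α t : ℝ) :
    ContinuousOn (fun s => rlKernel (1-α) (t-s)) (Set.Iio t) := by
  simp only [rlKernel]
  apply ContinuousOn.div_const
  apply ContinuousOn.rpow_const (by fun_prop)
  intro s hs
  exact Or.inl (by simp only [Set.mem_Iio] at hs; intro h; linarith [sub_pos.mpr hs, h])

lemma rlK_aesm (α t : ℝ) (ht : 0 < t) :
    AEStronglyMeasurable (fun s => rlKernel (1-α) (t-s)) (volume.restrict (Set.Ioc 0 t)) := by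
  rw [Measure.restrict_congr_set (Ioo_ae_eq_Ioc (a := (0:ℝ)) (b := t)).symm]
  exact ((rlK_contOn α t).mono (fun s hs => hs.2)).aestronglyMeasurable measurableSet_Ioo

lemma rlK_smul_int {E : Type*} [NormedAddCommGroup E] [NormedSpace ℝ E] (α t : ℝ)
    (hα1 : α < 1) (ht : 0 < t) (w : ℝ → E)
    (hw : ContinuousOn w (Set.Icc 0 t)) :
    IntervalIntegrable (fun s => rlKernel (1-α) (t-s) • w s) volume 0 t := by
  obtain ⟨C, hC⟩ := (isCompact_Icc.image_of_continuousOn hw).isBounded.exists_norm_le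
  rw [intervalIntegrable_iff_integrableOn_Ioc_of_le ht.le]
  have hK : IntegrableOn (fun s => rlKernel (1-α) (t-s)) (Set.Ioc 0 t) volume :=
    (intervalIntegrable_iff_integrableOn_Ioc_of_le ht.le).mp (rlK_int α t hα1)
  apply Integrable.mono' (hK.const_mul C)
  · exact (rlK_aesm α t ht).smul
      ((hw.mono Set.Ioc_subset_Icc_self).aestronglyMeasurable measurableSet_Ioc)
  · filter_upwards [ae_restrict_mem measurableSet_Ioc] with s hs
    rw [norm_smul]
    rw [Real.norm_of_nonneg (rlK_nonneg α t s hα1 hs.2)]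
    rw [mul_comm C]
    exact mul_le_mul_of_nonneg_left
      (hC _ (Set.mem_image_of_mem w (Set.Ioc_subset_Icc_self hs)))
      (rlK_nonneg α t s hα1 hs.2)

section aux
variable {H : Type*} [NormedAddCommGroup H] [InnerProductSpace ℝ H] [CompleteSpace H]

lemma alikhanov_key (α t T : ℝ) (hα0 : 0 < α) (hα1 : α < 1) (ht0 : 0 < t) (htT : t ≤ T)
    (v v' : ℝ → H) (hderiv : ∀ s ∈ Set.Icc (0:ℝ) T, HasDerivAt v (v' s) s)
    (hcont : ContinuousOn v' (Set.Icc (0:ℝ) T)) :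
    (∫ s in (0:ℝ)..t, rlKernel (1-α) (t-s) * (2 * ⟪v' s, v s - v t⟫)) ≤ 0 := by
  have hΓ : 0 < Real.Gamma (1-α) := Real.Gamma_pos_of_pos (by linarith)
  set K : ℝ → ℝ := fun s => rlKernel (1-α) (t-s) with hKdef
  set g : ℝ → ℝ := fun s => ‖v s - v t‖^2 with hgdef
  set gd : ℝ → ℝ := fun s => 2 * ⟪v' s, v s - v t⟫ with hgddef
  have hIccsub : Set.Icc (0:ℝ) t ⊆ Set.Icc 0 T := Set.Icc_subset_Icc_right htT
  -- derivative of g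
  have hg : ∀ s ∈ Set.Icc (0:ℝ) T, HasDerivAt g (gd s) s := by
    intro s hs
    have h1 : HasDerivAt (fun r => v r - v t) (v' s) s := (hderiv s hs).sub_const (v t)
    have h2 := h1.inner ℝ h1
    have hfun : (fun r => ⟪v r - v t, v r - v t⟫) = g :=
      funext fun r => real_inner_self_eq_norm_sq _
    rw [hfun] at h2
    refine h2.congr_deriv ?_
    have hcomm := real_inner_comm (v s - v t) (v' s)
    simp only [hgddef]
    linarith
  -- bound on v'
  obtain ⟨M, hM⟩ := (isCompact_Icc.image_of_continuousOn hcont).isBounded.exists_norm_le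
  have hM' : ∀ s ∈ Set.Icc (0:ℝ) T, ‖v' s‖ ≤ M := fun s hs => hM _ (Set.mem_image_of_mem _ hs)
  have hM0 : 0 ≤ M := le_trans (norm_nonneg _) (hM' 0 (Set.mem_Icc.mpr ⟨le_refl _, by linarith⟩))
  -- bound on v x - v t
  have hvdiff : ∀ x ∈ Set.Icc (0:ℝ) t, ‖v x - v t‖ ≤ M * (t - x) := by
    intro x hx
    have hsub : Set.uIcc x t ⊆ Set.Icc 0 T := by
      rw [Set.uIcc_of_le hx.2]
      exact fun s hs => ⟨le_trans hx.1 hs.1, le_trans hs.2 htT⟩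
    have hftc : ∫ s in x..t, v' s = v t - v x :=
      integral_eq_sub_of_hasDerivAt (fun s hs => hderiv s (hsub hs))
        ((hcont.mono hsub).intervalIntegrable)
    rw [norm_sub_rev, ← hftc]
    have := intervalIntegral.norm_integral_le_of_norm_le_const
      (f := v') (C := M) (a := x) (b := t) (fun y hy => by
        rw [Set.uIoc_of_le hx.2] at hy
        exact hM' y ⟨le_trans hx.1 hy.1.le, le_trans hy.2 htT⟩)
    rwa [abs_of_nonneg (by linarith [hx.2])] at this
  -- continuity of gd
  have gdcont : ContinuousOn gd (Set.Icc (0:ℝ) T) := by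
    apply ContinuousOn.mul continuousOn_const
    have vcont : ContinuousOn v (Set.Icc (0:ℝ) T) :=
      fun s hs => ((hderiv s hs).continuousAt).continuousWithinAt
    exact hcont.inner (vcont.sub continuousOn_const)
  -- integrability of K * gd on [0,t]
  have hFint : IntervalIntegrable (fun s => K s * gd s) volume 0 t := by
    have := rlK_smul_int (E := ℝ) α t hα1 ht0 gd (gdcont.mono hIccsub)
    simpa [smul_eq_mul] using this
  set F : ℝ → ℝ := fun x => ∫ s in (0:ℝ)..x, K s * gd s with hFdef
  have hFcont : ContinuousOn F (Set.Icc 0 t) := by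
    have h1 : IntegrableOn (fun s => K s * gd s) (Set.uIcc 0 t) volume := by
      rw [Set.uIcc_of_le ht0.le, integrableOn_Icc_iff_integrableOn_Ioc]
      exact (intervalIntegrable_iff_integrableOn_Ioc_of_le ht0.le).mp hFint
    have := intervalIntegral.continuousOn_primitive_interval h1
    rwa [Set.uIcc_of_le ht0.le] at this
  -- derivative of the kernel
  set Kd : ℝ → ℝ := fun s => α * (t-s) ^ (-α-1) / Real.Gamma (1-α) with hKddef
  have hKderiv : ∀ s ∈ Set.Iio t, HasDerivAt K (Kd s) s := by
    intro s hs
    have hts : (0:ℝ) < t - s := sub_pos.mpr hs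
    have h1 : HasDerivAt (fun y : ℝ => t - y) (-1) s := (hasDerivAt_id s).const_sub t
    have h2 : HasDerivAt (fun y : ℝ => y ^ (-α)) (-α * (t-s) ^ (-α-1)) (t-s) :=
      Real.hasDerivAt_rpow_const (Or.inl hts.ne')
    have h3 := (h2.comp s h1).div_const (Real.Gamma (1-α))
    have hfun : (fun y => ((fun y : ℝ => y ^ (-α)) ∘ (fun y : ℝ => t - y)) y
        / Real.Gamma (1-α)) = K := by
      funext y
      simp only [hKdef, rlKernel, Function.comp]
      norm_num
    rw [hfun] at h3
    refine h3.congr_deriv ?_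
    simp only [hKddef]
    field_simp
  -- the key pointwise bound from integration by parts
  have hbound : ∀ x ∈ Set.Ico (0:ℝ) t,
      F x ≤ (M^2 / Real.Gamma (1-α)) * (t-x) ^ (2-α) := by
    intro x hx
    have hxt : x < t := hx.2
    have hxIcc : Set.uIcc (0:ℝ) x = Set.Icc 0 x := Set.uIcc_of_le hx.1
    have hsubT : Set.uIcc (0:ℝ) x ⊆ Set.Icc 0 T := by
      rw [hxIcc]
      exact fun s hs => ⟨hs.1, le_trans hs.2 (le_trans hxt.le htT)⟩
    have hKd_int : IntervalIntegrable Kd volume 0 x := by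
      apply ContinuousOn.intervalIntegrable
      rw [hxIcc]
      apply ContinuousOn.div_const
      apply ContinuousOn.mul continuousOn_const
      apply ContinuousOn.rpow_const (by fun_prop)
      intro s hs
      exact Or.inl (sub_pos.mpr (lt_of_le_of_lt hs.2 hxt)).ne'
    have hgd_int : IntervalIntegrable gd volume 0 x :=
      (gdcont.mono hsubT).intervalIntegrable
    have hibp := intervalIntegral.integral_mul_deriv_eq_deriv_mul
      (u := K) (v := g) (u' := Kd) (v' := gd) (a := 0) (b := x)
      (fun s hs => hKderiv s (lt_of_le_of_lt (hxIcc ▸ hs).2 hxt))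
      (fun s hs => hg s (hsubT hs))
      hKd_int hgd_int
    have h1 : 0 ≤ K 0 * g 0 := by
      apply mul_nonneg (rlK_nonneg α t 0 hα1 ht0.le)
      exact sq_nonneg _
    have h2 : 0 ≤ ∫ s in (0:ℝ)..x, Kd s * g s := by
      apply intervalIntegral.integral_nonneg hx.1
      intro s hs
      apply mul_nonneg
      · apply div_nonneg _ hΓ.le
        exact mul_nonneg hα0.le (Real.rpow_nonneg (by linarith [hs.2] : (0:ℝ) ≤ t - s) _)
      · exact sq_nonneg _
    have hr : (0:ℝ) < t - x := sub_pos.mpr hxt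
    have h3 : K x * g x ≤ (M^2 / Real.Gamma (1-α)) * (t-x) ^ (2-α) := by
      have hgx : g x ≤ (M * (t-x))^2 := by
        have hv := hvdiff x ⟨hx.1, hxt.le⟩
        simpa [hgdef] using pow_le_pow_left₀ (norm_nonneg _) hv 2
      have hKx : K x = (t-x) ^ (-α) / Real.Gamma (1-α) := by
        simp only [hKdef, rlKernel]
        norm_num
      have hpow : (t-x) ^ (-α) * (t-x) ^ (2:ℕ) = (t-x) ^ (2-α) := by
        rw [← Real.rpow_natCast (t-x) 2, ← Real.rpow_add hr]
        congr 1
        push_cast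
        ring
      calc K x * g x ≤ ((t-x) ^ (-α) / Real.Gamma (1-α)) * (M * (t-x))^2 := by
            rw [hKx]
            exact mul_le_mul_of_nonneg_left hgx
              (div_nonneg (Real.rpow_nonneg hr.le _) hΓ.le)
        _ = ((t-x) ^ (-α) * (t-x) ^ (2:ℕ)) * M^2 / Real.Gamma (1-α) := by ring
        _ = (M^2 / Real.Gamma (1-α)) * (t-x) ^ (2-α) := by rw [hpow]; ring
    have hFx : F x = K x * g x - K 0 * g 0 - ∫ s in (0:ℝ)..x, Kd s * g s := hibp
    linarith
  -- limiting argument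
  haveI hne : (nhdsWithin t (Set.Ico (0:ℝ) t)).NeBot := by
    apply mem_closure_iff_nhdsWithin_neBot.mp
    rw [closure_Ico ht0.ne]
    exact ⟨ht0.le, le_refl t⟩
  have hFt : Filter.Tendsto F (nhdsWithin t (Set.Ico 0 t)) (nhds (F t)) :=
    (hFcont t ⟨ht0.le, le_refl t⟩).mono Set.Ico_subset_Icc_self
  have hh0 : Filter.Tendsto (fun x => (M^2 / Real.Gamma (1-α)) * (t-x) ^ (2-α))
      (nhdsWithin t (Set.Ico 0 t)) (nhds 0) := by
    have h1 : Filter.Tendsto (fun x : ℝ => t - x) (nhds t) (nhds 0) := by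
      have hc : Continuous (fun x : ℝ => t - x) := continuous_const.sub continuous_id
      have := hc.tendsto t
      simpa using this
    have h2 : Filter.Tendsto (fun y : ℝ => y ^ (2-α)) (nhds 0) (nhds 0) := by
      have := (Real.continuousAt_rpow_const 0 (2-α) (Or.inr (by linarith))).tendsto
      simpa [Real.zero_rpow (by intro h; linarith : (2:ℝ) - α ≠ 0)] using this
    have h3 := ((h2.comp h1).const_mul (M^2 / Real.Gamma (1-α))).mono_left
      (nhdsWithin_le_nhds (s := Set.Ico (0:ℝ) t))
    simpa [Function.comp] using h3
  have hfin := le_of_tendsto_of_tendsto hFt hh0 (eventually_nhdsWithin_of_forall hbound)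
  exact hfin

end aux

/-- Alikhanov's inequality: `∂_t^α(‖v‖²)(t) ≤ 2⟨(∂_t^α v)(t), v(t)⟩` for the Caputo
derivative `∂_t^α φ = 𝓘^{1-α}(φ')`. -/
theorem stmt9 {H : Type*} [NormedAddCommGroup H] [InnerProductSpace ℝ H] [CompleteSpace H]
    (α T : ℝ) (hα0 : 0 < α) (hα1 : α < 1) (hT : 0 < T)
    (v v' : ℝ → H) (hderiv : ∀ s ∈ Set.Icc (0:ℝ) T, HasDerivAt v (v' s) s)
    (hcont : ContinuousOn v' (Set.Icc (0:ℝ) T)) :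
    ∀ t ∈ Set.Ioc (0:ℝ) T,
      (∫ s in (0:ℝ)..t, rlKernel (1 - α) (t - s) * deriv (fun r => ‖v r‖ ^ 2) s) ≤
        2 * ⟪∫ s in (0:ℝ)..t, rlKernel (1 - α) (t - s) • v' s, v t⟫ := by

  intro t ht
  obtain ⟨ht0, htT⟩ := ht
  have hIccsub : Set.Icc (0:ℝ) t ⊆ Set.Icc 0 T := Set.Icc_subset_Icc_right htT
  have vcont : ContinuousOn v (Set.Icc (0:ℝ) T) :=
    fun s hs => ((hderiv s hs).continuousAt).continuousWithinAt
  -- rewrite LHS integrand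
  have hnormderiv : ∀ s ∈ Set.Icc (0:ℝ) T,
      HasDerivAt (fun r => ‖v r‖ ^ 2) (2 * ⟪v' s, v s⟫) s := by
    intro s hs
    have h1 := hderiv s hs
    have h2 := h1.inner ℝ h1
    have hfun : (fun r => ⟪v r, v r⟫) = (fun r => ‖v r‖ ^ 2) :=
      funext fun r => real_inner_self_eq_norm_sq _
    rw [hfun] at h2
    refine h2.congr_deriv ?_
    have hcomm := real_inner_comm (v s) (v' s)
    linarith
  have hLHS : (∫ s in (0:ℝ)..t, rlKernel (1 - α) (t - s) * deriv (fun r => ‖v r‖ ^ 2) s)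
      = ∫ s in (0:ℝ)..t, rlKernel (1 - α) (t - s) * (2 * ⟪v' s, v s⟫) := by
    apply intervalIntegral.integral_congr
    intro s hs
    rw [Set.uIcc_of_le ht0.le] at hs
    show rlKernel (1 - α) (t - s) * deriv (fun r => ‖v r‖ ^ 2) s
      = rlKernel (1 - α) (t - s) * (2 * ⟪v' s, v s⟫)
    rw [(hnormderiv s (hIccsub hs)).deriv]
  rw [hLHS]
  -- rewrite RHS
  have hfint := rlK_smul_int α t hα1 ht0 v' (hcont.mono hIccsub)
  have hcomm := (innerSL ℝ (v t)).intervalIntegral_comp_comm hfint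
  have hRHS : ⟪∫ s in (0:ℝ)..t, rlKernel (1 - α) (t - s) • v' s, v t⟫
      = ∫ s in (0:ℝ)..t, rlKernel (1 - α) (t - s) * (2 * ⟪v' s, v t⟫) / 2 := by
    rw [real_inner_comm]
    rw [show (inner ℝ (v t) (∫ s in (0:ℝ)..t, rlKernel (1 - α) (t - s) • v' s) : ℝ)
      = innerSL ℝ (v t) (∫ s in (0:ℝ)..t, rlKernel (1 - α) (t - s) • v' s) from rfl]
    rw [← hcomm]
    apply intervalIntegral.integral_congr
    intro s _
    simp only [innerSL_apply_apply, real_inner_smul_right]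
    rw [real_inner_comm]
    ring
  rw [hRHS]
  rw [← intervalIntegral.integral_const_mul]
  have e1 : IntervalIntegrable
      (fun s => rlKernel (1 - α) (t - s) * (2 * ⟪v' s, v s⟫)) volume 0 t := by
    have := rlK_smul_int (E := ℝ) α t hα1 ht0 (fun s => 2 * ⟪v' s, v s⟫)
      ((continuousOn_const.mul ((hcont.inner vcont).mono hIccsub)))
    simpa [smul_eq_mul] using this
  have e2 : IntervalIntegrable
      (fun s => rlKernel (1 - α) (t - s) * (2 * ⟪v' s, v t⟫)) volume 0 t := by
    have := rlK_smul_int (E := ℝ) α t hα1 ht0 (fun s => 2 * ⟪v' s, v t⟫)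
      ((continuousOn_const.mul ((hcont.inner continuousOn_const).mono hIccsub)))
    simpa [smul_eq_mul] using this
  have key := alikhanov_key α t T hα0 hα1 ht0 htT v v' hderiv hcont
  have hsplit : (∫ s in (0:ℝ)..t, rlKernel (1 - α) (t - s) * (2 * ⟪v' s, v s - v t⟫))
      = (∫ s in (0:ℝ)..t, rlKernel (1 - α) (t - s) * (2 * ⟪v' s, v s⟫))
        - ∫ s in (0:ℝ)..t, rlKernel (1 - α) (t - s) * (2 * ⟪v' s, v t⟫) := by
    rw [← intervalIntegral.integral_sub e1 e2]
    apply intervalIntegral.integral_congr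
    intro s _
    simp only [inner_sub_right]
    ring
  have hcg : (∫ s in (0:ℝ)..t, 2 * (rlKernel (1 - α) (t - s) * (2 * ⟪v' s, v t⟫) / 2))
      = ∫ s in (0:ℝ)..t, rlKernel (1 - α) (t - s) * (2 * ⟪v' s, v t⟫) := by
    apply intervalIntegral.integral_congr
    intro s _
    ring
  rw [hcg]
  linarith
end

section
/- Weakly singular Gronwall inequality (continuous version): let 0<α≤1, M≥0 and T>0. There exists a constant C>0, depending only on α, M and T, with the following property: if y:[0,T]→ℝ is continuous and nonnegative, f:[0,T]→ℝ is nonnegative and nondecreasing, and y(t) ≤ f(t) + M∫₀ᵗ (t−s)^{α−1} y(s) ds for all t∈[0,T], then y(t) ≤ C f(t) for all t∈[0,T]. -/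
open MeasureTheory intervalIntegral

/-- Weakly singular Gronwall inequality (continuous version). -/
theorem stmt10 (α M T : ℝ) (hα0 : 0 < α) (hα1 : α ≤ 1) (hM : 0 ≤ M) (hT : 0 < T) :
    ∃ C > 0, ∀ y f : ℝ → ℝ,
      ContinuousOn y (Set.Icc 0 T) →
      (∀ t ∈ Set.Icc (0:ℝ) T, 0 ≤ y t) →
      (∀ t ∈ Set.Icc (0:ℝ) T, 0 ≤ f t) →
      (∀ s ∈ Set.Icc (0:ℝ) T, ∀ t ∈ Set.Icc (0:ℝ) T, s ≤ t → f s ≤ f t) →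
      (∀ t ∈ Set.Icc (0:ℝ) T,
        y t ≤ f t + M * ∫ s in (0:ℝ)..t, (t - s) ^ (α - 1) * y s) →
      ∀ t ∈ Set.Icc (0:ℝ) T, y t ≤ C * f t := by
  have hα' : (-1:ℝ) < α - 1 := by linarith
  have hβ' : (-1:ℝ) < α/2 - 1 := by linarith
  have hTβ : (0:ℝ) < T ^ (α/2) := Real.rpow_pos_of_pos hT _
  set B : ℝ := 4*(M+1)*T^(α/2)/α with hBdef
  have hMT : (0:ℝ) < M + 1 := by linarith
  have hBpos : 0 < B := by
    rw [hBdef]; positivity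
  set lam : ℝ := max 1 (B ^ (2/α)) with hlamdef
  have hlam1 : (1:ℝ) ≤ lam := le_max_left _ _
  have hlampos : 0 < lam := lt_of_lt_of_le one_pos hlam1
  have hlamB : B ≤ lam ^ (α/2) := by
    have h1 : B ^ (2/α) ≤ lam := le_max_right _ _
    have h2 : (B ^ (2/α)) ^ (α/2) = B := by
      rw [← Real.rpow_mul hBpos.le, show (2/α)*(α/2) = 1 by field_simp, Real.rpow_one]
    calc B = (B ^ (2/α)) ^ (α/2) := h2.symm
      _ ≤ lam ^ (α/2) := Real.rpow_le_rpow (Real.rpow_nonneg hBpos.le _) h1 (by positivity)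
  -- pointwise kernel bound
  have hker : ∀ r : ℝ, 0 < r →
      r ^ (α-1) * Real.exp (-(lam*r)) ≤ lam ^ (-(α/2)) * r ^ (α/2 - 1) := by
    intro r hr
    have hxr : 0 < lam * r := by positivity
    have h1 : (lam*r) ^ (α/2) ≤ 1 + lam*r := by
      rcases le_total (lam*r) 1 with h | h
      · have := Real.rpow_le_one (z := α/2) hxr.le h (by positivity)
        linarith
      · have h2 : (lam*r) ^ (α/2) ≤ (lam*r) ^ (1:ℝ) :=
          Real.rpow_le_rpow_of_exponent_le h (by linarith)
        rw [Real.rpow_one] at h2; linarith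
    have hx : (lam*r) ^ (α/2) ≤ Real.exp (lam*r) := by
      have := Real.add_one_le_exp (lam*r)
      linarith
    have h2 : Real.exp (-(lam*r)) ≤ (lam*r) ^ (-(α/2)) := by
      rw [Real.exp_neg, Real.rpow_neg hxr.le]
      exact inv_anti₀ (Real.rpow_pos_of_pos hxr _) hx
    calc r^(α-1) * Real.exp (-(lam*r)) ≤ r^(α-1) * (lam*r)^(-(α/2)) :=
          mul_le_mul_of_nonneg_left h2 (Real.rpow_nonneg hr.le _)
      _ = lam ^ (-(α/2)) * r ^ (α/2-1) := by
          rw [Real.mul_rpow hlampos.le hr.le,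
            show α/2 - 1 = (α-1) + (-(α/2)) by ring, Real.rpow_add hr]
          ring
  -- integrability
  have hint_h : ∀ a b : ℝ, IntervalIntegrable
      (fun r => r^(α-1) * Real.exp (-(lam*r))) volume a b := by
    intro a b
    exact (intervalIntegrable_rpow' hα').mul_continuousOn
      (Continuous.continuousOn (by fun_prop))
  -- smallness of the weighted kernel mass
  have hIT : M * (∫ r in (0:ℝ)..T, r^(α-1)*Real.exp (-(lam*r))) ≤ 1/2 := by
    have hz : ∀ᵐ (r:ℝ) ∂volume, r ≠ 0 := by
      rw [MeasureTheory.ae_iff]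
      simp only [ne_eq, not_not, Set.setOf_eq_eq_singleton]
      exact measure_singleton 0
    have hae : (fun r => r^(α-1)*Real.exp (-(lam*r)))
        ≤ᵐ[volume.restrict (Set.Icc (0:ℝ) T)] (fun r => lam^(-(α/2)) * r^(α/2-1)) := by
      filter_upwards [ae_restrict_mem measurableSet_Icc, ae_restrict_of_ae hz] with r hr hne
      exact hker r (lt_of_le_of_ne hr.1 (Ne.symm hne))
    have hmono : (∫ r in (0:ℝ)..T, r^(α-1)*Real.exp (-(lam*r)))
        ≤ ∫ r in (0:ℝ)..T, lam^(-(α/2)) * r^(α/2-1) :=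
      integral_mono_ae_restrict hT.le (hint_h 0 T)
        ((intervalIntegrable_rpow' hβ').const_mul _) hae
    have hcalc : (∫ r in (0:ℝ)..T, lam^(-(α/2)) * r^(α/2-1))
        = lam^(-(α/2)) * (T^(α/2) / (α/2)) := by
      rw [intervalIntegral.integral_const_mul, integral_rpow (Or.inl hβ')]
      rw [show α/2 - 1 + 1 = α/2 by ring, Real.zero_rpow (by positivity : α/2 ≠ 0)]
      ring
    have hQ : (0:ℝ) ≤ T^(α/2) / (α/2) := by positivity
    have hlamneg : lam ^ (-(α/2)) ≤ B⁻¹ := by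
      rw [Real.rpow_neg hlampos.le]
      exact inv_anti₀ hBpos hlamB
    have h2 : (∫ r in (0:ℝ)..T, r^(α-1)*Real.exp (-(lam*r))) ≤ B⁻¹ * (T^(α/2)/(α/2)) := by
      calc (∫ r in (0:ℝ)..T, r^(α-1)*Real.exp (-(lam*r)))
          ≤ lam^(-(α/2)) * (T^(α/2)/(α/2)) := by rw [← hcalc]; exact hmono
        _ ≤ B⁻¹ * (T^(α/2)/(α/2)) := mul_le_mul_of_nonneg_right hlamneg hQ
    have h3 : B⁻¹ * (T^(α/2)/(α/2)) = 1/(2*(M+1)) := by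
      rw [hBdef]
      field_simp
      ring
    have h4 : M * (B⁻¹ * (T^(α/2)/(α/2))) ≤ 1/2 := by
      rw [h3, mul_one_div, div_le_div_iff₀ (by positivity) (by norm_num : (0:ℝ) < 2)]
      linarith
    calc M * (∫ r in (0:ℝ)..T, r^(α-1)*Real.exp (-(lam*r)))
        ≤ M * (B⁻¹ * (T^(α/2)/(α/2))) := mul_le_mul_of_nonneg_left h2 hM
      _ ≤ 1/2 := h4
  -- the constant
  refine ⟨2 * Real.exp (lam * T), by positivity, ?_⟩
  intro y f hycont hy0 hf0 hfmono hineq t₀ ht₀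
  obtain ⟨ht₀0, ht₀T⟩ := ht₀
  have hsub : Set.Icc (0:ℝ) t₀ ⊆ Set.Icc (0:ℝ) T := Set.Icc_subset_Icc_right ht₀T
  -- maximum of the weighted function
  have hgcont : ContinuousOn (fun s => y s * Real.exp (-(lam * s))) (Set.Icc 0 t₀) :=
    (hycont.mono hsub).mul (Continuous.continuousOn (by fun_prop))
  obtain ⟨ts, hts, hmax⟩ := isCompact_Icc.exists_isMaxOn (Set.nonempty_Icc.mpr ht₀0) hgcont
  set Z : ℝ := y ts * Real.exp (-(lam * ts)) with hZdef
  have hts' : ts ∈ Set.Icc (0:ℝ) T := hsub hts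
  have hZ0 : 0 ≤ Z := by
    have h0 : y 0 * Real.exp (-(lam*0)) ≤ Z := hmax (Set.left_mem_Icc.mpr ht₀0)
    simp only [mul_zero, neg_zero, Real.exp_zero, mul_one] at h0
    exact le_trans (hy0 0 ⟨le_refl _, hT.le⟩) h0
  have hyZ : ∀ s ∈ Set.Icc (0:ℝ) t₀, y s ≤ Z * Real.exp (lam * s) := by
    intro s hs
    have h1 : y s * Real.exp (-(lam*s)) ≤ Z := hmax hs
    calc y s = (y s * Real.exp (-(lam*s))) * Real.exp (lam*s) := by
          rw [mul_assoc, ← Real.exp_add]; simp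
      _ ≤ Z * Real.exp (lam*s) := mul_le_mul_of_nonneg_right h1 (Real.exp_nonneg _)
  -- integrability of the singular kernel
  have hker_int : ∀ t : ℝ, 0 ≤ t →
      IntervalIntegrable (fun s => (t - s)^(α-1)) volume 0 t := by
    intro t ht
    have h := ((intervalIntegrable_rpow' hα' (a := 0) (b := t)).comp_sub_left t).symm
    simpa using h
  have hyint : IntervalIntegrable (fun s => (ts - s)^(α-1) * y s) volume 0 ts :=
    (hker_int ts hts'.1).mul_continuousOn
      (hycont.mono (by rw [Set.uIcc_of_le hts'.1]; exact Set.Icc_subset_Icc_right hts'.2))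
  have hZint : IntervalIntegrable (fun s => (ts - s)^(α-1) * (Z * Real.exp (lam*s)))
      volume 0 ts :=
    (hker_int ts hts'.1).mul_continuousOn (Continuous.continuousOn (by fun_prop))
  -- main estimate on the integral
  have hIy : (∫ s in (0:ℝ)..ts, (ts - s)^(α-1) * y s)
      ≤ Z * Real.exp (lam*ts) * ∫ r in (0:ℝ)..ts, r^(α-1) * Real.exp (-(lam*r)) := by
    have step1 : (∫ s in (0:ℝ)..ts, (ts - s)^(α-1)*y s)
        ≤ ∫ s in (0:ℝ)..ts, (ts - s)^(α-1) * (Z * Real.exp (lam*s)) := by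
      refine integral_mono_on hts'.1 hyint hZint (fun s hs => ?_)
      exact mul_le_mul_of_nonneg_left
        (hyZ s ⟨hs.1, le_trans hs.2 hts.2⟩)
        (Real.rpow_nonneg (by linarith [hs.2]) _)
    have step2 : (fun s => (ts - s)^(α-1) * (Z * Real.exp (lam*s)))
        = fun s => (Z * Real.exp (lam*ts)) * ((ts - s)^(α-1) * Real.exp (-(lam*(ts - s)))) := by
      funext s
      have h : Real.exp (lam*ts) * Real.exp (-(lam*(ts-s))) = Real.exp (lam*s) := by
        rw [← Real.exp_add]; congr 1; ring
      rw [← h]; ring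
    calc (∫ s in (0:ℝ)..ts, (ts - s)^(α-1)*y s)
        ≤ ∫ s in (0:ℝ)..ts, (ts - s)^(α-1) * (Z * Real.exp (lam*s)) := step1
      _ = ∫ s in (0:ℝ)..ts,
            (Z * Real.exp (lam*ts)) * ((ts - s)^(α-1) * Real.exp (-(lam*(ts - s)))) := by
          rw [step2]
      _ = (Z * Real.exp (lam*ts)) *
            ∫ s in (0:ℝ)..ts, ((ts - s)^(α-1) * Real.exp (-(lam*(ts - s)))) :=
          intervalIntegral.integral_const_mul _ _
      _ = Z * Real.exp (lam*ts) * ∫ r in (0:ℝ)..ts, r^(α-1) * Real.exp (-(lam*r)) := by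
          congr 1
          have h := intervalIntegral.integral_comp_sub_left (a := (0:ℝ)) (b := ts)
            (fun r => r^(α-1)*Real.exp (-(lam*r))) ts
          simpa using h
  -- monotonicity of the kernel mass in the interval
  have hImono : (∫ r in (0:ℝ)..ts, r^(α-1)*Real.exp (-(lam*r)))
      ≤ ∫ r in (0:ℝ)..T, r^(α-1)*Real.exp (-(lam*r)) := by
    refine integral_mono_interval (le_refl 0) hts'.1 hts'.2 ?_ (hint_h 0 T)
    filter_upwards [ae_restrict_mem measurableSet_Ioc] with r hr
    have : (0:ℝ) ≤ r := hr.1.le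
    positivity
  -- close the fixed point inequality
  have hZle : Z ≤ f t₀ + 1/2 * Z := by
    have h1 := hineq ts hts'
    have hfts : f ts ≤ f t₀ := hfmono ts hts' t₀ ⟨ht₀0, ht₀T⟩ hts.2
    have hexp1 : Real.exp (-(lam*ts)) ≤ 1 := by
      rw [Real.exp_le_one_iff]
      have := hts'.1; nlinarith
    have hft₀ : 0 ≤ f t₀ := hf0 t₀ ⟨ht₀0, ht₀T⟩
    have h2 : Z ≤ (f t₀ + M * ∫ s in (0:ℝ)..ts, (ts - s)^(α-1)*y s) * Real.exp (-(lam*ts)) := by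
      rw [hZdef]
      exact mul_le_mul_of_nonneg_right (h1.trans (by linarith)) (Real.exp_nonneg _)
    have hexpc : Real.exp (-(lam*ts)) * Real.exp (lam*ts) = 1 := by
      rw [← Real.exp_add]; simp
    have h3 : M * Real.exp (-(lam*ts)) * (∫ s in (0:ℝ)..ts, (ts - s)^(α-1)*y s)
        ≤ M * Z * ∫ r in (0:ℝ)..ts, r^(α-1)*Real.exp (-(lam*r)) := by
      have := mul_le_mul_of_nonneg_left hIy
        (by positivity : (0:ℝ) ≤ M * Real.exp (-(lam*ts)))
      calc M * Real.exp (-(lam*ts)) * (∫ s in (0:ℝ)..ts, (ts - s)^(α-1)*y s)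
          ≤ M * Real.exp (-(lam*ts)) *
            (Z * Real.exp (lam*ts) * ∫ r in (0:ℝ)..ts, r^(α-1)*Real.exp (-(lam*r))) := this
        _ = M * Z * ((Real.exp (-(lam*ts)) * Real.exp (lam*ts)) *
              ∫ r in (0:ℝ)..ts, r^(α-1)*Real.exp (-(lam*r))) := by ring
        _ = M * Z * ∫ r in (0:ℝ)..ts, r^(α-1)*Real.exp (-(lam*r)) := by
            rw [hexpc, one_mul]
    have h4 : M * Z * (∫ r in (0:ℝ)..ts, r^(α-1)*Real.exp (-(lam*r)))
        ≤ M * Z * ∫ r in (0:ℝ)..T, r^(α-1)*Real.exp (-(lam*r)) :=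
      mul_le_mul_of_nonneg_left hImono (by positivity)
    have h5 : M * Z * (∫ r in (0:ℝ)..T, r^(α-1)*Real.exp (-(lam*r))) ≤ 1/2 * Z := by
      have := mul_le_mul_of_nonneg_left hIT hZ0
      calc M * Z * (∫ r in (0:ℝ)..T, r^(α-1)*Real.exp (-(lam*r)))
          = Z * (M * ∫ r in (0:ℝ)..T, r^(α-1)*Real.exp (-(lam*r))) := by ring
        _ ≤ Z * (1/2) := this
        _ = 1/2 * Z := by ring
    calc Z ≤ (f t₀ + M * ∫ s in (0:ℝ)..ts, (ts - s)^(α-1)*y s) * Real.exp (-(lam*ts)) := h2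
      _ = f t₀ * Real.exp (-(lam*ts))
          + M * Real.exp (-(lam*ts)) * ∫ s in (0:ℝ)..ts, (ts - s)^(α-1)*y s := by ring
      _ ≤ f t₀ + 1/2 * Z := by
          have hf1 : f t₀ * Real.exp (-(lam*ts)) ≤ f t₀ :=
            by nlinarith [Real.exp_nonneg (-(lam*ts))]
          linarith [h3.trans (h4.trans h5)]
  have hZ2 : Z ≤ 2 * f t₀ := by linarith
  have hft₀ : 0 ≤ f t₀ := hf0 t₀ ⟨ht₀0, ht₀T⟩
  calc y t₀ ≤ Z * Real.exp (lam * t₀) := hyZ t₀ (Set.right_mem_Icc.mpr ht₀0)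
    _ ≤ (2 * f t₀) * Real.exp (lam * t₀) :=
        mul_le_mul_of_nonneg_right hZ2 (Real.exp_nonneg _)
    _ ≤ (2 * f t₀) * Real.exp (lam * T) := by
        have : Real.exp (lam * t₀) ≤ Real.exp (lam * T) := by
          apply Real.exp_le_exp.mpr
          nlinarith
        nlinarith [Real.exp_nonneg (lam * t₀)]
    _ = 2 * Real.exp (lam * T) * f t₀ := by ring
end

section
/- Discrete Leibniz identity for convolution quadrature: let α∈ℝ, τ>0, n≥1 an integer, and U_0,…,U_n elements of a real vector space; write t_j=jτ and let (tU) denote the sequence (t_j U_j)_{j≥0}. Then t_n (∂_τ^α U)^n = (∂_τ^α (tU))^n − α (∂_τ^{α−1} U)^{n−1}; explicitly, t_n τ^{−α} Σ_{j=0}^n a_{n−j}^{(α)} U_j = τ^{−α} Σ_{j=0}^n a_{n−j}^{(α)} t_j U_j − α τ^{1−α} Σ_{j=0}^{n−1} a_{n−1−j}^{(α−1)} U_j. -/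
/-- The convolution quadrature weight `a_j^{(β)} = (-1)^j (β choose j)`, where
`(β choose j) = β(β-1)⋯(β-j+1)/j!` is the generalized binomial coefficient. -/
noncomputable def cqWeight (β : ℝ) (j : ℕ) : ℝ :=
  (-1) ^ j * ((∏ i ∈ Finset.range j, (β - i)) / (j.factorial : ℝ))

lemma cqWeight_key (β : ℝ) (m : ℕ) :
    ((m : ℝ) + 1) * cqWeight β (m + 1) = -β * cqWeight (β - 1) m := by
  unfold cqWeight
  rw [Finset.prod_range_succ']
  simp only [Nat.cast_zero, sub_zero]
  rw [Finset.prod_congr rfl (fun i _ => by push_cast; ring :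
    ∀ i ∈ Finset.range m, β - ((i : ℕ) + 1 : ℕ) = (β - 1) - i)]
  rw [Nat.factorial_succ]
  have hm : (m.factorial : ℝ) ≠ 0 := Nat.cast_ne_zero.mpr m.factorial_ne_zero
  have hm1 : ((m : ℝ) + 1) ≠ 0 := by positivity
  push_cast
  field_simp
  ring

/-- Discrete Leibniz identity for the backward-Euler convolution quadrature
`(∂_τ^β V)^n = τ^{-β} Σ_{j=0}^n a_{n-j}^{(β)} V_j`:
`t_n (∂_τ^α U)^n = (∂_τ^α (tU))^n - α (∂_τ^{α-1} U)^{n-1}`. -/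
theorem stmt11 {V : Type*} [AddCommGroup V] [Module ℝ V]
    (α τ : ℝ) (hτ : 0 < τ) (n : ℕ) (hn : 1 ≤ n) (U : ℕ → V) :
    ((n : ℝ) * τ) • (τ ^ (-α) • ∑ j ∈ Finset.range (n + 1), cqWeight α (n - j) • U j) =
      τ ^ (-α) • (∑ j ∈ Finset.range (n + 1), cqWeight α (n - j) • (((j : ℝ) * τ) • U j))
        - α • (τ ^ (1 - α) •
            ∑ j ∈ Finset.range n, cqWeight (α - 1) (n - 1 - j) • U j) := by

  have hd : τ ^ (1 - α) = τ * τ ^ (-α) := by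
    rw [show (1:ℝ) - α = 1 + -α by ring, Real.rpow_add hτ, Real.rpow_one]
  have h : τ ^ (-α) • (∑ j ∈ Finset.range (n + 1), cqWeight α (n - j) • (((j : ℝ) * τ) • U j))
      - ((n : ℝ) * τ) • (τ ^ (-α) • ∑ j ∈ Finset.range (n + 1), cqWeight α (n - j) • U j)
      = α • (τ ^ (1 - α) • ∑ j ∈ Finset.range n, cqWeight (α - 1) (n - 1 - j) • U j) := by
    rw [hd]
    simp only [Finset.smul_sum, smul_smul]
    rw [← Finset.sum_sub_distrib]
    simp only [← sub_smul]
    rw [Finset.sum_range_succ]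
    have hz : (τ ^ (-α) * (cqWeight α (n - n) * ((n : ℝ) * τ))
        - (n : ℝ) * τ * (τ ^ (-α) * cqWeight α (n - n))) • U n = 0 := by
      have : τ ^ (-α) * (cqWeight α (n - n) * ((n : ℝ) * τ))
        - (n : ℝ) * τ * (τ ^ (-α) * cqWeight α (n - n)) = (0:ℝ) := by ring
      rw [this, zero_smul ℝ (U n)]
    rw [hz, add_zero]
    apply Finset.sum_congr rfl
    intro j hj
    have hjn : j < n := Finset.mem_range.mp hj
    have h1 : n - j = (n - 1 - j) + 1 := by omega
    have h2 : ((n - 1 - j : ℕ) : ℝ) = (n : ℝ) - (j : ℝ) - 1 := by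
      have : (n - 1 - j : ℕ) + (j + 1) = n := by omega
      have := congrArg (Nat.cast : ℕ → ℝ) this
      push_cast at this
      linarith
    have hkey := cqWeight_key α (n - 1 - j)
    rw [h1]
    congr 1
    linear_combination (-(τ * τ ^ (-α))) * hkey
      + (τ * τ ^ (-α) * cqWeight α ((n - 1 - j) + 1)) * h2
  rw [← h]; abel
end

section
/- Discrete positive definiteness of the convolution quadrature weights: let H be a real inner product space, 0<α<1, τ>0, n≥0, and v_0,…,v_n ∈ H. Then (τ^α/2) Σ_{j=0}^n ‖v_j‖² ≤ Σ_{j=0}^n ⟨(∂_τ^{−α} v)^j, v_j⟩, i.e. Σ_{j=0}^n Σ_{i=0}^j a_{j−i}^{(−α)} ⟨v_i, v_j⟩ ≥ (1/2) Σ_{j=0}^n ‖v_j‖². -/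
open RealInnerProductSpace

lemma cq_eq (α : ℝ) (j : ℕ) :
    cqWeight (-α) j = (∏ i ∈ Finset.range j, (α + i)) / (j.factorial : ℝ) := by
  unfold cqWeight
  have h : (∏ i ∈ Finset.range j, (-α - (i : ℝ)))
      = (-1) ^ j * ∏ i ∈ Finset.range j, (α + i) := by
    rw [show ((-1 : ℝ)) ^ j = ∏ _i ∈ Finset.range j, (-1 : ℝ) by simp,
      ← Finset.prod_mul_distrib]
    exact Finset.prod_congr rfl fun i _ => by ring
  rw [h, mul_div_assoc, ← mul_assoc, ← mul_pow]
  norm_num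

lemma cq_pos {α : ℝ} (hα : 0 < α) (j : ℕ) : 0 < cqWeight (-α) j := by
  rw [cq_eq]
  exact div_pos (Finset.prod_pos fun i _ => by positivity)
    (by exact_mod_cast j.factorial_pos)

lemma cq_succ (α : ℝ) (j : ℕ) :
    cqWeight (-α) (j + 1) = cqWeight (-α) j * ((α + j) / (j + 1)) := by
  rw [cq_eq, cq_eq, Finset.prod_range_succ, Nat.factorial_succ]
  have h1 : (j.factorial : ℝ) ≠ 0 := by exact_mod_cast j.factorial_pos.ne'
  have h2 : ((j : ℝ) + 1) ≠ 0 := by positivity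
  push_cast
  field_simp

lemma cq_d_eq (α : ℝ) (j : ℕ) :
    cqWeight (-α) j - cqWeight (-α) (j + 1)
      = cqWeight (-α) j * ((1 - α) / (j + 1)) := by
  have h2 : ((j : ℝ) + 1) ≠ 0 := by positivity
  rw [cq_succ]
  field_simp
  ring

lemma cq_d_nonneg {α : ℝ} (hα0 : 0 < α) (hα1 : α < 1) (j : ℕ) :
    0 ≤ cqWeight (-α) j - cqWeight (-α) (j + 1) := by
  rw [cq_d_eq]
  exact mul_nonneg (cq_pos hα0 j).le (div_nonneg (by linarith) (by positivity))

lemma cq_e_nonneg {α : ℝ} (hα0 : 0 < α) (hα1 : α < 1) (j : ℕ) :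
    0 ≤ (cqWeight (-α) j - cqWeight (-α) (j + 1))
      - (cqWeight (-α) (j + 1) - cqWeight (-α) (j + 2)) := by
  have hb := cq_pos hα0 j
  have h1 : ((j : ℝ) + 1) ≠ 0 := by positivity
  have h2 : ((j : ℝ) + 2) ≠ 0 := by positivity
  rw [cq_d_eq, show j + 2 = (j + 1) + 1 from rfl, cq_d_eq, cq_succ]
  push_cast
  rw [show cqWeight (-α) j * ((1 - α) / (↑j + 1))
      - cqWeight (-α) j * ((α + ↑j) / (↑j + 1)) * ((1 - α) / (↑j + 1 + 1))
      = cqWeight (-α) j * ((1 - α) * (2 - α) / ((↑j + 1) * (↑j + 2))) from by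
    field_simp; ring]
  exact mul_nonneg hb.le (div_nonneg (mul_nonneg (by linarith) (by linarith)) (by positivity))

lemma tri_sum (N : ℕ) (f : ℕ → ℕ → ℝ) (hsym : ∀ i j, f i j = f j i) :
    ∑ j ∈ Finset.range N, ∑ i ∈ Finset.range N, f i j
      = 2 * (∑ j ∈ Finset.range N, ∑ i ∈ Finset.range (j + 1), f i j)
        - ∑ j ∈ Finset.range N, f j j := by
  induction N with
  | zero => simp
  | succ N ih =>
    have e1 : ∑ j ∈ Finset.range (N + 1), ∑ i ∈ Finset.range (N + 1), f i j
        = (∑ j ∈ Finset.range N, ∑ i ∈ Finset.range N, f i j)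
          + ∑ j ∈ Finset.range N, f N j + (∑ i ∈ Finset.range N, f i N + f N N) := by
      rw [Finset.sum_range_succ]
      rw [Finset.sum_congr rfl fun j _ => Finset.sum_range_succ (fun i => f i j) N]
      rw [Finset.sum_add_distrib, Finset.sum_range_succ]
    have e2 : ∑ j ∈ Finset.range (N + 1), ∑ i ∈ Finset.range (j + 1), f i j
        = (∑ j ∈ Finset.range N, ∑ i ∈ Finset.range (j + 1), f i j)
          + (∑ i ∈ Finset.range N, f i N + f N N) := by
      rw [Finset.sum_range_succ, Finset.sum_range_succ]
    have e3 : ∑ j ∈ Finset.range (N + 1), f j j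
        = (∑ j ∈ Finset.range N, f j j) + f N N := Finset.sum_range_succ _ _
    have e4 : ∑ j ∈ Finset.range N, f N j = ∑ i ∈ Finset.range N, f i N :=
      Finset.sum_congr rfl fun j _ => hsym N j
    rw [e1, e2, e3, e4, ih]
    ring

/-- Discrete positive definiteness of the convolution quadrature weights:
`(τ^α/2) Σ_{j=0}^n ‖v_j‖² ≤ Σ_{j=0}^n ⟨(∂_τ^{-α} v)^j, v_j⟩`. -/
theorem stmt12 {H : Type*} [NormedAddCommGroup H] [InnerProductSpace ℝ H]
    (α τ : ℝ) (hα0 : 0 < α) (hα1 : α < 1) (hτ : 0 < τ) (n : ℕ) (v : ℕ → H) :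
    τ ^ α / 2 * ∑ j ∈ Finset.range (n + 1), ‖v j‖ ^ 2 ≤
      ∑ j ∈ Finset.range (n + 1),
        ⟪τ ^ α • ∑ i ∈ Finset.range (j + 1), cqWeight (-α) (j - i) • v i, v j⟫ := by
  classical
  set b : ℕ → ℝ := fun k => cqWeight (-α) k with hbdef
  have hbk : ∀ k, cqWeight (-α) k = b k := fun k => rfl
  have hb0 : b 0 = 1 := by simp [hbdef, cq_eq]
  have hbpos : ∀ k, 0 < b k := fun k => cq_pos hα0 k
  set d : ℕ → ℝ := fun k => b k - b (k + 1) with hddef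
  have hdnn : ∀ k, 0 ≤ d k := fun k => cq_d_nonneg hα0 hα1 k
  have henn : ∀ k, 0 ≤ d k - d (k + 1) := fun k => cq_e_nonneg hα0 hα1 k
  set g : ℕ → ℝ := fun r => (d r - d (r + 1)) + (if r + 1 = n then d n else 0) with hgdef
  have hgnn : ∀ r, 0 ≤ g r := by
    intro r
    have : (0:ℝ) ≤ if r + 1 = n then d n else 0 := by
      split_ifs; exacts [hdnn n, le_refl 0]
    have h2 := henn r
    simp only [hgdef]
    linarith
  -- telescoping
  have tele : ∀ p, ∀ k, k ≤ p → ∑ r ∈ Finset.Ico k p, (d r - d (r + 1)) = d k - d p := by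
    intro p
    induction p with
    | zero => intro k hk; obtain rfl := Nat.le_zero.mp hk; simp
    | succ p ih =>
      intro k hk
      rcases eq_or_lt_of_le hk with rfl | h
      · simp
      · have hk' : k ≤ p := Nat.lt_succ_iff.mp h
        rw [Finset.sum_Ico_succ_top hk', ih k hk']
        ring
  -- key representation
  have key : ∀ m, ∀ k, k + m = n →
      b k = b n + ∑ r ∈ Finset.range n, g r * ((r + 1 - k : ℕ) : ℝ) := by
    intro m
    induction m with
    | zero =>
      intro k hk
      obtain rfl : k = n := by omega
      rw [Finset.sum_eq_zero, add_zero]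
      intro r hr
      simp only [Finset.mem_range] at hr
      have : r + 1 - k = 0 := by omega
      simp [this]
    | succ m ih =>
      intro k hk
      have hkn : k < n := by omega
      have ihk := ih (k + 1) (by omega)
      have hterm : ∀ r, g r * ((r + 1 - k : ℕ) : ℝ)
          = g r * ((r + 1 - (k + 1) : ℕ) : ℝ) + (if k ≤ r then g r else 0) := by
        intro r
        by_cases h : k ≤ r
        · rw [if_pos h]
          have h1 : r + 1 - k = (r + 1 - (k + 1)) + 1 := by omega
          rw [h1]; push_cast; ring
        · rw [if_neg h]
          have h1 : r + 1 - k = 0 := by omega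
          have h2 : r + 1 - (k + 1) = 0 := by omega
          rw [h1, h2]; simp
      have hsplit : ∑ r ∈ Finset.range n, g r * ((r + 1 - k : ℕ) : ℝ)
          = (∑ r ∈ Finset.range n, g r * ((r + 1 - (k + 1) : ℕ) : ℝ))
            + ∑ r ∈ Finset.Ico k n, g r := by
        rw [Finset.sum_congr rfl fun r _ => hterm r, Finset.sum_add_distrib]
        congr 1
        rw [← Finset.sum_filter]
        congr 1
        ext r
        simp only [Finset.mem_filter, Finset.mem_range, Finset.mem_Ico]
        tauto
      have hIco : ∑ r ∈ Finset.Ico k n, g r = d k := by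
        have h1 : ∑ r ∈ Finset.Ico k n, g r
            = (∑ r ∈ Finset.Ico k n, (d r - d (r + 1)))
              + ∑ r ∈ Finset.Ico k n, (if r + 1 = n then d n else 0) := by
          simp only [hgdef]
          rw [Finset.sum_add_distrib]
        have h2 : ∑ r ∈ Finset.Ico k n, (if r + 1 = n then d n else 0) = d n := by
          have h3 : ∀ r, (if r + 1 = n then d n else 0) = (if r = n - 1 then d n else 0) := by
            intro r
            by_cases h : r + 1 = n
            · rw [if_pos h, if_pos (by omega)]
            · rw [if_neg h, if_neg (by omega)]
          rw [Finset.sum_congr rfl fun r _ => h3 r,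
            Finset.sum_ite_eq' (Finset.Ico k n) (n - 1) (fun _ => d n),
            if_pos (by simp only [Finset.mem_Ico]; omega)]
        rw [h1, h2, tele n k hkn.le]
        ring
      have hdk : d k = b k - b (k + 1) := rfl
      rw [hsplit, hIco]
      linarith [ihk]
  -- notation
  set N := n + 1 with hNdef
  set c : ℕ → ℕ → ℝ := fun i j => ⟪v i, v j⟫ with hcdef
  have hτα : (0:ℝ) < τ ^ α := Real.rpow_pos_of_pos hτ α
  -- rewrite RHS of the goal
  have hrhs : ∀ j, ⟪τ ^ α • ∑ i ∈ Finset.range (j + 1), cqWeight (-α) (j - i) • v i, v j⟫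
      = τ ^ α * ∑ i ∈ Finset.range (j + 1), b (j - i) * c i j := by
    intro j
    rw [real_inner_smul_left, sum_inner]
    congr 1
    exact Finset.sum_congr rfl fun i _ => real_inner_smul_left _ _ _
  have hgoal : ∑ j ∈ Finset.range N,
      ⟪τ ^ α • ∑ i ∈ Finset.range (j + 1), cqWeight (-α) (j - i) • v i, v j⟫
      = τ ^ α * ∑ j ∈ Finset.range N, ∑ i ∈ Finset.range (j + 1), b (j - i) * c i j := by
    rw [Finset.sum_congr rfl fun j _ => hrhs j, Finset.mul_sum]
  have hnorm : ∑ j ∈ Finset.range N, ‖v j‖ ^ 2 = ∑ j ∈ Finset.range N, c j j := by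
    refine Finset.sum_congr rfl fun j _ => ?_
    rw [hcdef]
    exact (real_inner_self_eq_norm_sq (v j)).symm
  rw [hgoal, hnorm]
  -- reduce to the key inequality on T
  set T := ∑ j ∈ Finset.range N, ∑ i ∈ Finset.range (j + 1), b (j - i) * c i j with hTdef
  have hmain : ∑ j ∈ Finset.range N, c j j ≤ 2 * T := by
    -- the symmetric (square) quadratic form
    set S := ∑ j ∈ Finset.range N, ∑ i ∈ Finset.range N, b (max i j - min i j) * c i j
      with hSdef
    have hsym : ∀ i j, b (max i j - min i j) * c i j = b (max j i - min j i) * c j i := by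
      intro i j
      rw [max_comm, min_comm]
      simp only [hcdef]
      rw [real_inner_comm]
    have htri := tri_sum N (fun i j => b (max i j - min i j) * c i j) hsym
    have hTeq : ∑ j ∈ Finset.range N, ∑ i ∈ Finset.range (j + 1),
        b (max i j - min i j) * c i j = T := by
      refine Finset.sum_congr rfl fun j _ => Finset.sum_congr rfl fun i hi => ?_
      simp only [Finset.mem_range] at hi
      have hij : i ≤ j := by omega
      rw [max_eq_right hij, min_eq_left hij]
    have hdiag : ∀ j ∈ Finset.range N, b (max j j - min j j) * c j j = c j j := by
      intro j _
      simp [hb0]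
    -- window vectors
    set u : ℕ → ℕ → H := fun r t =>
      ∑ i ∈ Finset.range N, (if i ≤ t ∧ t ≤ i + r then (1:ℝ) else 0) • v i with hudef
    have hu : ∀ r t, ⟪u r t, u r t⟫ = ∑ j ∈ Finset.range N, ∑ i ∈ Finset.range N,
        (if i ≤ t ∧ t ≤ i + r then (1:ℝ) else 0)
          * (if j ≤ t ∧ t ≤ j + r then (1:ℝ) else 0) * c i j := by
      intro r t
      simp only [hudef]
      rw [inner_sum]
      refine Finset.sum_congr rfl fun j _ => ?_
      rw [sum_inner]
      refine Finset.sum_congr rfl fun i _ => ?_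
      rw [real_inner_smul_left, real_inner_smul_right]
      simp only [hcdef]
      ring
    -- Fejér counting
    have hcnt : ∀ (r : ℕ), ∀ i ∈ Finset.range N, ∀ j ∈ Finset.range N,
        ∑ t ∈ Finset.range (n + r + 1),
          (if i ≤ t ∧ t ≤ i + r then (1:ℝ) else 0)
            * (if j ≤ t ∧ t ≤ j + r then (1:ℝ) else 0)
        = ((r + 1 - (max i j - min i j) : ℕ) : ℝ) := by
      intro r i hi j hj
      simp only [Finset.mem_range] at hi hj
      have h1 : ∀ t, (if i ≤ t ∧ t ≤ i + r then (1:ℝ) else 0)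
          * (if j ≤ t ∧ t ≤ j + r then (1:ℝ) else 0)
          = if max i j ≤ t ∧ t ≤ min i j + r then 1 else 0 := by
        intro t
        rw [ite_mul, one_mul, zero_mul, ← ite_and]
        congr 1
        rcases le_total i j with h | h
        · rw [max_eq_right h, min_eq_left h, eq_iff_iff]
          constructor
          · rintro ⟨⟨a1, a2⟩, b1, b2⟩; omega
          · rintro ⟨a1, a2⟩; omega
        · rw [max_eq_left h, min_eq_right h, eq_iff_iff]
          constructor
          · rintro ⟨⟨a1, a2⟩, b1, b2⟩; omega
          · rintro ⟨a1, a2⟩; omega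
      rw [Finset.sum_congr rfl fun t _ => h1 t, Finset.sum_boole]
      have h2 : Finset.filter (fun t => max i j ≤ t ∧ t ≤ min i j + r)
          (Finset.range (n + r + 1)) = Finset.Icc (max i j) (min i j + r) := by
        have hmn : min i j ≤ n := le_trans (min_le_left i j) (by omega)
        ext t
        simp only [Finset.mem_filter, Finset.mem_range, Finset.mem_Icc]
        constructor
        · tauto
        · rintro ⟨a1, a2⟩
          exact ⟨by omega, a1, a2⟩
      rw [h2, Nat.card_Icc]
      congr 1
      have hmn : min i j ≤ max i j := min_le_max
      omega
    -- sum over translates of window r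
    have h2 : ∀ r, ∑ t ∈ Finset.range (n + r + 1), ⟪u r t, u r t⟫
        = ∑ j ∈ Finset.range N, ∑ i ∈ Finset.range N,
            ((r + 1 - (max i j - min i j) : ℕ) : ℝ) * c i j := by
      intro r
      rw [Finset.sum_congr rfl fun t _ => hu r t, Finset.sum_comm]
      refine Finset.sum_congr rfl fun j hj => ?_
      rw [Finset.sum_comm]
      refine Finset.sum_congr rfl fun i hi => ?_
      rw [← Finset.sum_mul, hcnt r i hi j hj]
    -- decompose S
    have hinner : ⟪∑ i ∈ Finset.range N, v i, ∑ j ∈ Finset.range N, v j⟫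
        = ∑ j ∈ Finset.range N, ∑ i ∈ Finset.range N, c i j := by
      rw [inner_sum]
      refine Finset.sum_congr rfl fun j _ => ?_
      rw [sum_inner]
    have hS' : S = b n * ⟪∑ i ∈ Finset.range N, v i, ∑ j ∈ Finset.range N, v j⟫
        + ∑ r ∈ Finset.range n, g r * ∑ t ∈ Finset.range (n + r + 1), ⟪u r t, u r t⟫ := by
      have hterm : ∀ i ∈ Finset.range N, ∀ j ∈ Finset.range N,
          b (max i j - min i j) * c i j
          = b n * c i j + ∑ r ∈ Finset.range n,
              g r * (((r + 1 - (max i j - min i j) : ℕ) : ℝ) * c i j) := by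
        intro i hi j hj
        simp only [Finset.mem_range] at hi hj
        have hle : max i j - min i j ≤ n := by
          have := max_le (show i ≤ n by omega) (show j ≤ n by omega)
          omega
        rw [key (n - (max i j - min i j)) (max i j - min i j) (by omega), add_mul,
          Finset.sum_mul]
        congr 1
        exact Finset.sum_congr rfl fun r _ => by ring
      rw [hSdef,
        Finset.sum_congr rfl fun j hj =>
          Finset.sum_congr rfl fun i hi => hterm i hi j hj]
      rw [Finset.sum_congr rfl fun j (hj : j ∈ Finset.range N) =>
        Finset.sum_add_distrib (s := Finset.range N)]
      rw [Finset.sum_add_distrib]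
      congr 1
      · rw [hinner, Finset.mul_sum]
        exact Finset.sum_congr rfl fun j _ => by rw [Finset.mul_sum]
      · rw [Finset.sum_congr rfl fun j (_ : j ∈ Finset.range N) => Finset.sum_comm,
          Finset.sum_comm]
        refine Finset.sum_congr rfl fun r _ => ?_
        rw [h2 r, Finset.mul_sum]
        refine Finset.sum_congr rfl fun j _ => ?_
        rw [Finset.mul_sum]
    have hS0 : 0 ≤ S := by
      rw [hS']
      refine add_nonneg (mul_nonneg (hbpos n).le real_inner_self_nonneg)
        (Finset.sum_nonneg fun r _ => mul_nonneg (hgnn r)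
          (Finset.sum_nonneg fun t _ => real_inner_self_nonneg))
    have hSeq : S = 2 * T - ∑ j ∈ Finset.range N, c j j := by
      rw [hSdef, htri, hTeq, Finset.sum_congr rfl hdiag]
    linarith
  nlinarith [mul_nonneg hτα.le (sub_nonneg.mpr hmain)]
end

section
/- Discrete Alikhanov-type inequality for convolution quadrature: let H be a real inner product space, 0<α<1, τ>0, n≥0, and v_0,…,v_n ∈ H. Then (1/2)(∂_τ^α g)^n ≤ ⟨(∂_τ^α v)^n, v_n⟩ where g_j=‖v_j‖²; explicitly, Σ_{j=0}^n a_{n−j}^{(α)} ‖v_j‖² ≤ 2 Σ_{j=0}^n a_{n−j}^{(α)} ⟨v_j, v_n⟩. -/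
open RealInnerProductSpace

lemma cq_prod_shift (β : ℝ) (n : ℕ) :
    ∏ i ∈ Finset.range (n + 1), (β - i) = β * ∏ i ∈ Finset.range n, (β - 1 - i) := by
  rw [Finset.prod_range_succ']
  have : ∀ i ∈ Finset.range n, (β - ((i : ℕ) + 1 : ℕ)) = β - 1 - i := by
    intro i _; push_cast; ring
  rw [Finset.prod_congr rfl this]
  push_cast; ring

lemma cq_prod_sign (α : ℝ) (m : ℕ) :
    ∏ i ∈ Finset.range m, (α - 1 - i) = (-1) ^ m * ∏ i ∈ Finset.range m, (1 + i - α) := by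
  have : ∀ i ∈ Finset.range m, (α - 1 - (i : ℕ)) = (-1) * (1 + i - α) := by
    intro i _; ring
  rw [Finset.prod_congr rfl this, Finset.prod_mul_distrib, Finset.prod_const,
    Finset.card_range]

lemma cq_prod_pos (α : ℝ) (hα1 : α < 1) (m : ℕ) :
    0 < ∏ i ∈ Finset.range m, (1 + (i : ℝ) - α) := by
  apply Finset.prod_pos
  intro i _
  have : (0 : ℝ) ≤ i := Nat.cast_nonneg i
  linarith

lemma cq_pascal (β : ℝ) (n : ℕ) :
    cqWeight β (n + 1) = cqWeight (β - 1) (n + 1) - cqWeight (β - 1) n := by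
  unfold cqWeight
  rw [cq_prod_shift β n, Finset.prod_range_succ]
  have hfac : ((n + 1).factorial : ℝ) = (n + 1) * n.factorial := by
    rw [Nat.factorial_succ]; push_cast; ring
  have h0 : (n.factorial : ℝ) ≠ 0 := Nat.cast_ne_zero.mpr n.factorial_ne_zero
  have h1 : ((n : ℝ) + 1) ≠ 0 := by positivity
  rw [hfac]
  field_simp
  ring

lemma cq_sum (α : ℝ) (n : ℕ) :
    ∑ k ∈ Finset.range (n + 1), cqWeight α k = cqWeight (α - 1) n := by
  induction n with
  | zero => simp [cqWeight]
  | succ n ih =>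
    rw [Finset.sum_range_succ, ih, cq_pascal]
    ring

lemma cq_pred_nonneg (α : ℝ) (hα1 : α < 1) (n : ℕ) : 0 ≤ cqWeight (α - 1) n := by
  unfold cqWeight
  rw [cq_prod_sign α n]
  have hp := cq_prod_pos α hα1 n
  have hf : (0 : ℝ) < n.factorial := by positivity
  have key : (-1 : ℝ) ^ n * ((-1) ^ n * ∏ i ∈ Finset.range n, (1 + (i : ℝ) - α)) /
      (n.factorial : ℝ) = (∏ i ∈ Finset.range n, (1 + (i : ℝ) - α)) / n.factorial := by
    rw [← mul_assoc, ← pow_add, (by ring : n + n = 2 * n), pow_mul]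
    norm_num
  rw [← mul_div_assoc, key]
  positivity

lemma cq_nonpos (α : ℝ) (hα0 : 0 < α) (hα1 : α < 1) (m : ℕ) :
    cqWeight α (m + 1) ≤ 0 := by
  unfold cqWeight
  rw [cq_prod_shift α m, cq_prod_sign α m]
  have hp := cq_prod_pos α hα1 m
  have hf : (0 : ℝ) < (m + 1).factorial := by positivity
  have hsgn : (-1 : ℝ) ^ (m + 1) * (-1) ^ m = -1 := by
    rw [← pow_add, (by ring : m + 1 + m = 2 * m + 1), pow_succ, pow_mul]
    norm_num
  have key : (-1 : ℝ) ^ (m + 1) * (α * ((-1) ^ m * ∏ i ∈ Finset.range m, (1 + (i : ℝ) - α)) /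
      ((m + 1).factorial : ℝ)) =
      -(α * (∏ i ∈ Finset.range m, (1 + (i : ℝ) - α)) / ((m + 1).factorial : ℝ)) := by
    rw [mul_div_assoc', ← neg_div]; congr 1
    linear_combination (α * (∏ i ∈ Finset.range m, (1 + (i : ℝ) - α))) * hsgn
  rw [key]
  have : 0 ≤ α * (∏ i ∈ Finset.range m, (1 + (i : ℝ) - α)) / ((m + 1).factorial : ℝ) := by
    positivity
  linarith

/-- Discrete Alikhanov-type inequality for convolution quadrature:
`Σ_{j=0}^n a_{n-j}^{(α)} ‖v_j‖² ≤ 2 Σ_{j=0}^n a_{n-j}^{(α)} ⟨v_j, v_n⟩`. -/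
theorem stmt13 {H : Type*} [NormedAddCommGroup H] [InnerProductSpace ℝ H]
    (α τ : ℝ) (hα0 : 0 < α) (hα1 : α < 1) (hτ : 0 < τ) (n : ℕ) (v : ℕ → H) :
    ∑ j ∈ Finset.range (n + 1), cqWeight α (n - j) * ‖v j‖ ^ 2 ≤
      2 * ∑ j ∈ Finset.range (n + 1), cqWeight α (n - j) * ⟪v j, v n⟫ := by
  rw [← sub_nonneg]
  have h1 : 2 * ∑ j ∈ Finset.range (n + 1), cqWeight α (n - j) * ⟪v j, v n⟫
      - ∑ j ∈ Finset.range (n + 1), cqWeight α (n - j) * ‖v j‖ ^ 2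
      = ∑ j ∈ Finset.range (n + 1),
          cqWeight α (n - j) * (‖v n‖ ^ 2 - ‖v j - v n‖ ^ 2) := by
    rw [Finset.mul_sum, ← Finset.sum_sub_distrib]
    refine Finset.sum_congr rfl fun j _ => ?_
    have h := norm_sub_sq_real (v j) (v n)
    linear_combination cqWeight α (n - j) * h
  rw [h1]
  have h2 : ∑ j ∈ Finset.range (n + 1),
      cqWeight α (n - j) * (‖v n‖ ^ 2 - ‖v j - v n‖ ^ 2)
      = ‖v n‖ ^ 2 * (∑ j ∈ Finset.range (n + 1), cqWeight α (n - j))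
        - ∑ j ∈ Finset.range (n + 1), cqWeight α (n - j) * ‖v j - v n‖ ^ 2 := by
    rw [Finset.mul_sum, ← Finset.sum_sub_distrib]
    exact Finset.sum_congr rfl fun j _ => by ring
  rw [h2, sub_nonneg]
  have hsum : ∑ j ∈ Finset.range (n + 1), cqWeight α (n - j)
      = cqWeight (α - 1) n := by
    rw [← cq_sum α n]
    rw [← Finset.sum_range_reflect (fun k => cqWeight α k) (n + 1)]
    exact Finset.sum_congr rfl fun j hj => rfl
  have hA : 0 ≤ ‖v n‖ ^ 2 * (∑ j ∈ Finset.range (n + 1), cqWeight α (n - j)) := by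
    rw [hsum]
    have := cq_pred_nonneg α hα1 n
    positivity
  have hB : ∑ j ∈ Finset.range (n + 1), cqWeight α (n - j) * ‖v j - v n‖ ^ 2 ≤ 0 := by
    apply Finset.sum_nonpos
    intro j hj
    rcases eq_or_lt_of_le (Nat.lt_succ_iff.mp (Finset.mem_range.mp hj)) with h | h
    · subst h; simp
    · have hnj : n - j = (n - j - 1) + 1 := by omega
      rw [hnj]
      have hw := cq_nonpos α hα0 hα1 (n - j - 1)
      have : (0 : ℝ) ≤ ‖v j - v n‖ ^ 2 := by positivity
      exact mul_nonpos_of_nonpos_of_nonneg hw this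
  linarith
end
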